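/- arXiv:0901.2062 — 12 statements merged into one kernel-verified Lean document; each statement's English description precedes it below -/
import Mathlib

section
/- Let m ≥ 1 and let C be an F₂-linear subspace of (Fin (2^m) → ZMod 2) of dimension m+1 such that every nonzero element of C has Hamming weight at least 2^(m-1). Then the all-one vector belongs to C, and every element of C other than the zero vector and the all-one vector has Hamming weight exactly 2^(m-1); consequently C has weight enumerator 1 + 2(2^m − 1)·t^(2^(m-1)) + t^(2^m), i.e. exactly one codeword of weight 0, exactly 2(2^m−1) codewords of weight 2^(m-1), and exactly one codeword of weight 2^m. -/
open Finset

namespace RMaux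

variable {n : ℕ}

lemma zmod2_eq_one {a : ZMod 2} (h : a ≠ 0) : a = 1 := by
  revert h; revert a; decide

lemma halving (D : Submodule (ZMod 2) (Fin n → ZMod 2))
    [DecidablePred (· ∈ D)] (i : Fin n)
    (x₀ : Fin n → ZMod 2) (h0 : x₀ ∈ D) (h1 : x₀ i ≠ 0) :
    2 * (univ.filter fun x => x ∈ D ∧ x i ≠ 0).card
      = (univ.filter fun x : Fin n → ZMod 2 => x ∈ D).card := by
  have hx1 : x₀ i = 1 := zmod2_eq_one h1
  have hself : ∀ a : ZMod 2, a + a = 0 := by decide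
  have hbij : (univ.filter fun x : Fin n → ZMod 2 => x ∈ D ∧ x i = 0).card
      = (univ.filter fun x : Fin n → ZMod 2 => x ∈ D ∧ x i ≠ 0).card := by
    apply Finset.card_bij' (fun x _ => x + x₀) (fun x _ => x + x₀)
    · intro a ha
      simp only [mem_filter, mem_univ, true_and] at ha ⊢
      refine ⟨D.add_mem ha.1 h0, ?_⟩
      show a i + x₀ i ≠ 0
      rw [ha.2, hx1]; decide
    · intro a ha
      simp only [mem_filter, mem_univ, true_and] at ha ⊢
      refine ⟨D.add_mem ha.1 h0, ?_⟩
      show a i + x₀ i = 0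
      rw [zmod2_eq_one ha.2, hx1]; decide
    · intro a _
      funext j
      show a j + x₀ j + x₀ j = a j
      rw [add_assoc, hself, add_zero]
    · intro a _
      funext j
      show a j + x₀ j + x₀ j = a j
      rw [add_assoc, hself, add_zero]
  have hsplit : (univ.filter fun x : Fin n → ZMod 2 => x ∈ D ∧ x i = 0).card
      + (univ.filter fun x : Fin n → ZMod 2 => x ∈ D ∧ x i ≠ 0).card
      = (univ.filter fun x : Fin n → ZMod 2 => x ∈ D).card := by
    rw [← Finset.filter_filter, ← Finset.filter_filter,
      Finset.card_filter_add_card_filter_not]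
  rw [← hsplit, hbij, two_mul]

lemma count_le (D : Submodule (ZMod 2) (Fin n → ZMod 2))
    [DecidablePred (· ∈ D)] (i : Fin n) :
    2 * (univ.filter fun x => x ∈ D ∧ x i ≠ 0).card
      ≤ (univ.filter fun x : Fin n → ZMod 2 => x ∈ D).card := by
  by_cases h : ∃ x₀ ∈ D, x₀ i ≠ 0
  · obtain ⟨x₀, h0, h1⟩ := h
    exact (halving D i x₀ h0 h1).le
  · push_neg at h
    have hempty : (univ.filter fun x : Fin n → ZMod 2 => x ∈ D ∧ x i ≠ 0) = ∅ := by
      ext x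
      simp only [mem_filter, mem_univ, true_and, Finset.notMem_empty, iff_false, not_and]
      intro hx
      simp [h x hx]
    simp [hempty]

lemma sum_wt (D : Submodule (ZMod 2) (Fin n → ZMod 2)) [DecidablePred (· ∈ D)] :
    ∑ x ∈ univ.filter (· ∈ D), hammingNorm x
      = ∑ i : Fin n, (univ.filter fun x => x ∈ D ∧ x i ≠ 0).card := by
  classical
  simp_rw [hammingNorm, Finset.card_filter]
  rw [Finset.sum_comm]
  congr 1
  funext i
  rw [Finset.sum_filter]
  congr 1
  funext x
  by_cases hx : x ∈ D <;> by_cases hxi : x i ≠ 0 <;> simp [hx, hxi]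

lemma card_code (D : Submodule (ZMod 2) (Fin n → ZMod 2)) [DecidablePred (· ∈ D)] :
    (univ.filter fun x : Fin n → ZMod 2 => x ∈ D).card
      = 2 ^ Module.finrank (ZMod 2) D := by
  have h := Module.card_eq_pow_finrank (K := ZMod 2) (V := D)
  rw [ZMod.card] at h
  rw [← h, Fintype.card_subtype]

lemma sum_lb (D : Submodule (ZMod 2) (Fin n → ZMod 2)) [DecidablePred (· ∈ D)]
    (w : ℕ) (hw : ∀ x ∈ D, x ≠ 0 → w ≤ hammingNorm x) :
    ((univ.filter fun x : Fin n → ZMod 2 => x ∈ D).card - 1) * w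
      ≤ ∑ x ∈ univ.filter (· ∈ D), hammingNorm x := by
  have h0 : (0 : Fin n → ZMod 2) ∈ univ.filter (· ∈ D) := by
    simp [D.zero_mem]
  have hsub : ((univ.filter (· ∈ D)).erase 0) ⊆ univ.filter (· ∈ D) :=
    Finset.erase_subset _ _
  have hle : ∀ x ∈ (univ.filter (· ∈ D)).erase 0, w ≤ hammingNorm x := by
    intro x hx
    have hne := Finset.ne_of_mem_erase hx
    have hxD : x ∈ D := by
      have := Finset.mem_of_mem_erase hx
      simpa using this
    exact hw x hxD hne
  calc ((univ.filter fun x : Fin n → ZMod 2 => x ∈ D).card - 1) * w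
      = ((univ.filter (· ∈ D)).erase 0).card * w := by
        rw [Finset.card_erase_of_mem h0]
    _ = ((univ.filter (· ∈ D)).erase 0).card • w := by rw [smul_eq_mul]
    _ ≤ ∑ x ∈ (univ.filter (· ∈ D)).erase 0, hammingNorm x :=
        Finset.card_nsmul_le_sum _ _ _ hle
    _ ≤ ∑ x ∈ univ.filter (· ∈ D), hammingNorm x :=
        Finset.sum_le_sum_of_subset hsub

lemma all_eq {α : Type*} (s : Finset α) (f : α → ℕ) (w : ℕ)
    (hle : ∀ x ∈ s, w ≤ f x) (hsum : ∑ x ∈ s, f x ≤ s.card * w) :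
    ∀ x ∈ s, f x = w := by
  intro x hx
  by_contra hne
  have hlt : s.card * w < ∑ y ∈ s, f y := by
    calc s.card * w = ∑ _y ∈ s, w := by rw [Finset.sum_const, smul_eq_mul]
    _ < ∑ y ∈ s, f y :=
        Finset.sum_lt_sum hle ⟨x, hx, lt_of_le_of_ne (hle x hx) (Ne.symm hne)⟩
  omega

lemma shorten (D : Submodule (ZMod 2) (Fin n → ZMod 2)) [DecidablePred (· ∈ D)]
    (i : Fin n) (hall : ∀ x ∈ D, x i = 0) :
    2 * ∑ x ∈ univ.filter (· ∈ D), hammingNorm x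
      ≤ (n - 1) * (univ.filter fun x : Fin n → ZMod 2 => x ∈ D).card := by
  have hi0 : (univ.filter fun x : Fin n → ZMod 2 => x ∈ D ∧ x i ≠ 0).card = 0 := by
    rw [Finset.card_eq_zero]
    ext x
    simp only [mem_filter, mem_univ, true_and, Finset.notMem_empty, iff_false, not_and]
    intro hx
    simp [hall x hx]
  rw [sum_wt, Finset.mul_sum]
  rw [← Finset.add_sum_erase _ _ (Finset.mem_univ i)]
  rw [hi0]
  simp only [mul_zero, zero_add]
  calc ∑ j ∈ univ.erase i, 2 * (univ.filter fun x => x ∈ D ∧ x j ≠ 0).card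
      ≤ ∑ _j ∈ univ.erase i, (univ.filter fun x : Fin n → ZMod 2 => x ∈ D).card :=
        Finset.sum_le_sum (fun j _ => count_le D j)
    _ = (n - 1) * (univ.filter fun x : Fin n → ZMod 2 => x ∈ D).card := by
        rw [Finset.sum_const, smul_eq_mul, Finset.card_erase_of_mem (Finset.mem_univ i),
          Finset.card_univ, Fintype.card_fin]

end RMaux

open RMaux in
theorem first_order_RM_weight_distribution
    (m : ℕ) (hm : 1 ≤ m)
    (C : Submodule (ZMod 2) (Fin (2 ^ m) → ZMod 2))
    (hdim : Module.finrank (ZMod 2) C = m + 1)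
    (hmin : ∀ x ∈ C, x ≠ 0 → 2 ^ (m - 1) ≤ hammingNorm x) :
    (fun _ => (1 : ZMod 2)) ∈ C ∧
    (∀ x ∈ C, x ≠ 0 → x ≠ (fun _ => (1 : ZMod 2)) →
      hammingNorm x = 2 ^ (m - 1)) ∧
    {x : Fin (2 ^ m) → ZMod 2 | x ∈ C ∧ hammingNorm x = 0}.ncard = 1 ∧
    {x : Fin (2 ^ m) → ZMod 2 | x ∈ C ∧ hammingNorm x = 2 ^ (m - 1)}.ncard
      = 2 * (2 ^ m - 1) ∧
    {x : Fin (2 ^ m) → ZMod 2 | x ∈ C ∧ hammingNorm x = 2 ^ m}.ncard = 1 := by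
  classical
  set a : ℕ := 2 ^ (m - 1) with ha
  have hn : 2 ^ m = 2 * a := by
    rw [ha, ← pow_succ']
    congr 1
    omega
  have ha1 : 1 ≤ a := Nat.one_le_two_pow
  -- cardinality of C
  have hcardC : (univ.filter fun x : Fin (2 ^ m) → ZMod 2 => x ∈ C).card = 4 * a := by
    rw [card_code, hdim]
    rw [pow_succ, hn]
    ring
  -- Step A : every coordinate is hit
  have stepA : ∀ i : Fin (2 ^ m), ∃ x₀ ∈ C, x₀ i ≠ 0 := by
    intro i
    by_contra hcon
    push_neg at hcon
    have hall : ∀ x ∈ C, x i = 0 := by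
      intro x hx
      simpa using hcon x hx
    have h1 := shorten C i hall
    have h2 := sum_lb C a hmin
    rw [hcardC] at h1 h2
    have harithA : (2 ^ m - 1) * (4 * a) = (2 * a - 1) * (4 * a) := by rw [hn]
    rw [harithA] at h1
    have h2a : 1 ≤ 2 * a := by omega
    have h4a : 1 ≤ 4 * a := by omega
    zify [h2a, h4a] at h1 h2
    have haz : (1 : ℤ) ≤ (a : ℤ) := by exact_mod_cast ha1
    nlinarith [h1, h2, haz]
  -- the all-ones vector
  set e : Fin (2 ^ m) → ZMod 2 := fun _ => 1 with he
  have heval : ∀ j, e j = 1 := fun j => rfl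
  clear_value e
  have hwt_e : hammingNorm e = 2 ^ m := by
    rw [hammingNorm]
    have : ({x | e x ≠ 0} : Finset (Fin (2 ^ m))) = univ := by
      ext j
      simp [he]
    rw [this, Finset.card_univ, Fintype.card_fin]
  have hwt_full : ∀ x : Fin (2 ^ m) → ZMod 2, hammingNorm x = 2 ^ m → x = e := by
    intro x hx
    have huniv : ({j | x j ≠ 0} : Finset (Fin (2 ^ m))) = univ := by
      apply Finset.eq_univ_of_card
      rw [Fintype.card_fin]
      exact hx
    funext j
    have hxj : x j ≠ 0 := by
      have : j ∈ ({j | x j ≠ 0} : Finset (Fin (2 ^ m))) := by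
        rw [huniv]; exact Finset.mem_univ j
      simpa using this
    rw [heval j]
    exact zmod2_eq_one hxj
  -- Step B : codewords with a zero coordinate have weight exactly a
  have stepB : ∀ x ∈ C, x ≠ 0 → (∃ i, x i = 0) → hammingNorm x = a := by
    intro x hxC hx0 ⟨i, hxi⟩
    -- the shortened code
    set D : Submodule (ZMod 2) (Fin (2 ^ m) → ZMod 2) :=
      C ⊓ LinearMap.ker (LinearMap.proj (R := ZMod 2) (φ := fun _ : Fin (2 ^ m) => ZMod 2) i)
      with hD
    have hmemD : ∀ y : Fin (2 ^ m) → ZMod 2, y ∈ D ↔ y ∈ C ∧ y i = 0 := by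
      intro y
      simp [hD, Submodule.mem_inf, LinearMap.mem_ker, LinearMap.proj_apply]
    clear_value D
    -- card of D
    obtain ⟨x₀, hx₀C, hx₀i⟩ := stepA i
    have hhalf := halving C i x₀ hx₀C hx₀i
    rw [hcardC] at hhalf
    have hsplitD : (univ.filter fun y : Fin (2 ^ m) → ZMod 2 => y ∈ D).card
        + (univ.filter fun y : Fin (2 ^ m) → ZMod 2 => y ∈ C ∧ y i ≠ 0).card
        = 4 * a := by
      rw [← hcardC]
      have hDfilter : (univ.filter fun y : Fin (2 ^ m) → ZMod 2 => y ∈ D)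
          = univ.filter fun y : Fin (2 ^ m) → ZMod 2 => y ∈ C ∧ y i = 0 := by
        apply Finset.filter_congr
        intro y _
        simp [hmemD y]
      rw [hDfilter, ← Finset.filter_filter, ← Finset.filter_filter,
        Finset.card_filter_add_card_filter_not]
    have hcardD : (univ.filter fun y : Fin (2 ^ m) → ZMod 2 => y ∈ D).card = 2 * a := by
      linarith [hsplitD, hhalf]
    -- bounds for D
    have hallD : ∀ y ∈ D, y i = 0 := fun y hy => ((hmemD y).mp hy).2
    have hub := shorten D i hallD
    rw [hcardD] at hub
    have harithD : (2 ^ m - 1) * (2 * a) = 2 * ((2 * a - 1) * a) := by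
      rw [hn]
      exact mul_left_comm (2 * a - 1) 2 a
    rw [harithD] at hub
    have hminD : ∀ y ∈ D, y ≠ 0 → a ≤ hammingNorm y := by
      intro y hy hy0
      exact hmin y ((hmemD y).mp hy).1 hy0
    have hlb := sum_lb D a hminD
    rw [hcardD] at hlb
    have hsumD : ∑ y ∈ univ.filter (· ∈ D), hammingNorm y = (2 * a - 1) * a := by
      linarith [hub, hlb]
    -- extract exact weights on D \ {0}
    have h0D : (0 : Fin (2 ^ m) → ZMod 2) ∈ univ.filter (· ∈ D) := by
      simp [D.zero_mem]
    have hsum_erase : ∑ y ∈ (univ.filter (· ∈ D)).erase 0, hammingNorm y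
        = (2 * a - 1) * a := by
      have h := Finset.add_sum_erase _ hammingNorm h0D
      rw [hammingNorm_zero, zero_add] at h
      linarith [h, hsumD]
    have hcard_erase : ((univ.filter (· ∈ D)).erase 0).card = 2 * a - 1 := by
      rw [Finset.card_erase_of_mem h0D, hcardD]
    have hexact := all_eq ((univ.filter (· ∈ D)).erase 0) hammingNorm a
      (by
        intro y hy
        have hyD : y ∈ D := by
          have := Finset.mem_of_mem_erase hy
          simpa using this
        exact hminD y hyD (Finset.ne_of_mem_erase hy))
      (by rw [hsum_erase, hcard_erase])
    apply hexact
    rw [Finset.mem_erase]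
    refine ⟨hx0, ?_⟩
    simp [hmemD x, hxC, hxi]
  -- Step C : the all-ones vector is in C
  have heC : e ∈ C := by
    by_contra heC
    have hwc : ∀ x ∈ C, x ≠ 0 → hammingNorm x = a := by
      intro x hxC hx0
      apply stepB x hxC hx0
      by_contra hno
      push_neg at hno
      have : x = e := by
        funext j
        rw [heval j]
        exact zmod2_eq_one (hno j)
      rw [this] at hxC
      exact heC hxC
    -- total sum of weights two ways
    have hsum1 : ∑ x ∈ univ.filter (· ∈ C), hammingNorm x = (4 * a - 1) * a := by
      have h0C : (0 : Fin (2 ^ m) → ZMod 2) ∈ univ.filter (· ∈ C) := by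
        simp [C.zero_mem]
      have h := Finset.add_sum_erase _ hammingNorm h0C
      rw [hammingNorm_zero] at h
      have hconst : ∑ x ∈ (univ.filter (· ∈ C)).erase 0, hammingNorm x
          = ∑ _x ∈ (univ.filter (· ∈ C)).erase 0, a := by
        apply Finset.sum_congr rfl
        intro x hx
        have hxC : x ∈ C := by
          have := Finset.mem_of_mem_erase hx
          simpa using this
        rw [hwc x hxC (Finset.ne_of_mem_erase hx)]
      rw [hconst, Finset.sum_const, smul_eq_mul, Finset.card_erase_of_mem h0C, hcardC] at h
      linarith [h]
    have hsum2 : ∑ x ∈ univ.filter (· ∈ C), hammingNorm x = 2 * a * (2 * a) := by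
      rw [sum_wt]
      have hc : ∀ i : Fin (2 ^ m),
          (univ.filter fun x => x ∈ C ∧ x i ≠ 0).card = 2 * a := by
        intro i
        obtain ⟨x₀, hx₀C, hx₀i⟩ := stepA i
        have := halving C i x₀ hx₀C hx₀i
        rw [hcardC] at this
        linarith [this]
      rw [Finset.sum_congr rfl (fun i _ => hc i), Finset.sum_const, smul_eq_mul,
        Finset.card_univ, Fintype.card_fin, hn]
    have h4a : 1 ≤ 4 * a := by omega
    zify [h4a] at hsum1
    zify at hsum2
    have haz : (1 : ℤ) ≤ (a : ℤ) := by exact_mod_cast ha1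
    nlinarith [hsum1, hsum2, haz]
  -- Step D : exact weights
  have stepD : ∀ x ∈ C, x ≠ 0 → x ≠ e → hammingNorm x = a := by
    intro x hxC hx0 hxe
    apply stepB x hxC hx0
    by_contra hno
    push_neg at hno
    exact hxe (funext fun j => by rw [heval j]; exact zmod2_eq_one (hno j))
  refine ⟨heC, stepD, ?_, ?_, ?_⟩
  · -- weight 0 : only the zero vector
    have : {x : Fin (2 ^ m) → ZMod 2 | x ∈ C ∧ hammingNorm x = 0} = {0} := by
      ext x
      simp only [Set.mem_setOf_eq, Set.mem_singleton_iff, hammingNorm_eq_zero]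
      constructor
      · exact fun h => h.2
      · rintro rfl
        exact ⟨C.zero_mem, rfl⟩
    rw [this, Set.ncard_singleton]
  · -- weight a
    have hset : {x : Fin (2 ^ m) → ZMod 2 | x ∈ C ∧ hammingNorm x = a}
        = ↑(((univ.filter fun x : Fin (2 ^ m) → ZMod 2 => x ∈ C).erase 0).erase e) := by
      ext x
      rw [Set.mem_setOf_eq, Finset.mem_coe, Finset.mem_erase, Finset.mem_erase,
        Finset.mem_filter]
      constructor
      · rintro ⟨hxC, hwx⟩
        have hx0 : x ≠ 0 := by
          intro h
          rw [h, hammingNorm_zero] at hwx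
          omega
        have hxe : x ≠ e := by
          intro h
          rw [h, hwt_e, hn] at hwx
          omega
        exact ⟨hxe, hx0, Finset.mem_univ x, hxC⟩
      · rintro ⟨hxe, hx0, -, hxC⟩
        exact ⟨hxC, stepD x hxC hx0 hxe⟩
    rw [hset, Set.ncard_coe_finset]
    have h0C : (0 : Fin (2 ^ m) → ZMod 2) ∈ univ.filter
        (fun x : Fin (2 ^ m) → ZMod 2 => x ∈ C) := by
      simp [C.zero_mem]
    have he0 : e ≠ 0 := by
      intro h
      have h0 : (0 : ℕ) < 2 ^ m := by positivity
      have hc := congrFun h (⟨0, h0⟩ : Fin (2 ^ m))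
      rw [heval] at hc
      simp at hc
    have heF : e ∈ (univ.filter fun x : Fin (2 ^ m) → ZMod 2 => x ∈ C).erase 0 := by
      rw [Finset.mem_erase]
      exact ⟨he0, by simp [heC]⟩
    rw [Finset.card_erase_of_mem heF, Finset.card_erase_of_mem h0C, hcardC, hn]
    omega
  · -- weight 2^m : only the all-ones vector
    have : {x : Fin (2 ^ m) → ZMod 2 | x ∈ C ∧ hammingNorm x = 2 ^ m} = {e} := by
      ext x
      simp only [Set.mem_setOf_eq, Set.mem_singleton_iff]
      constructor
      · exact fun h => hwt_full x h.2
      · rintro rfl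
        exact ⟨heC, hwt_e⟩
    rw [this, Set.ncard_singleton]
end

section
/- Let m ≥ 1 and let V = (Fin m → ZMod 2), so |V| = 2^m. Let C be an F₂-linear subspace of (V → ZMod 2) of dimension m+1 such that every nonzero element of C has Hamming weight at least 2^(m-1). Then there exists a permutation σ of V such that C = { f ∘ σ : f ∈ R(1,m) }, where R(1,m) is the first-order Reed–Muller code, i.e. the F₂-subspace of (V → ZMod 2) spanned by the constant function 1 together with the m coordinate functions v ↦ v i (for i : Fin m). In other words, every binary linear [2^m, m+1, 2^(m-1)] code is equivalent (up to coordinate permutation) to the first-order Reed–Muller code. -/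
/-- The first-order Reed–Muller code `R(1,m)`: the `F₂`-subspace of Boolean
functions on `V = Fin m → ZMod 2` spanned by the constant function `1`
together with the coordinate functions `v ↦ v i`. -/
def ReedMuller1 (m : ℕ) : Submodule (ZMod 2) ((Fin m → ZMod 2) → ZMod 2) :=
  Submodule.span (ZMod 2)
    ({fun _ => (1 : ZMod 2)} ∪
      Set.range (fun i : Fin m => fun v : Fin m → ZMod 2 => v i))

lemma zmod2_cases (x : ZMod 2) : x = 0 ∨ x = 1 := by revert x; decide

lemma fiber_mul {G W : Type*} [AddCommGroup G] [Fintype G] [AddCommGroup W] [Fintype W]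
    [DecidableEq W] (φ : G →+ W) (h : Function.Surjective φ) (y : W) :
    Fintype.card W * Fintype.card {x : G // φ x = y} = Fintype.card G := by
  classical
  have key : ∀ z : W, Fintype.card {x : G // φ x = z} = Fintype.card {x : G // φ x = y} := by
    intro z
    obtain ⟨x₀, hx₀⟩ := h y
    obtain ⟨x₁, hx₁⟩ := h z
    apply Fintype.card_congr
    refine ⟨fun p => ⟨p.1 - x₁ + x₀, by simp [p.2, hx₀, hx₁]⟩,
            fun p => ⟨p.1 - x₀ + x₁, by simp [p.2, hx₀, hx₁]⟩, ?_, ?_⟩ <;>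
      intro p <;> ext <;> simp
  have hpart : Fintype.card G = ∑ z : W, Fintype.card {x : G // φ x = z} := by
    simp_rw [Fintype.card_subtype]
    exact Finset.card_eq_sum_card_fiberwise (fun x _ => Finset.mem_univ (φ x))
  rw [hpart]
  simp [key, Finset.sum_const, mul_comm]

lemma quad_term {wt aa nn : ℤ} (h1 : aa ≤ wt) (h2 : wt ≤ nn) :
    wt ^ 2 + aa * nn ≤ wt * (nn + aa) := by nlinarith

lemma P_le {P aa : ℤ} (h1 : 1 ≤ aa)
    (hbig : P * (2 * aa) + ((2 * aa) * (2 * aa) - P) * aa + (2 * (2 * aa) - 1) * (aa * (2 * aa))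
      ≤ (2 * aa) * (2 * aa) * (2 * aa + aa)) : P ≤ 2 * aa := by nlinarith

set_option maxHeartbeats 3200000 in
lemma key_lemma (m : ℕ) (hm : 1 ≤ m)
    (C : Submodule (ZMod 2) ((Fin m → ZMod 2) → ZMod 2))
    (hdim : Module.finrank (ZMod 2) C = m + 1)
    (hmin : ∀ f ∈ C, f ≠ 0 → 2 ^ (m - 1) ≤ hammingNorm f) :
    ((fun _ => (1 : ZMod 2)) ∈ C) ∧
      (∀ v w : Fin m → ZMod 2, (∀ f ∈ C, f v = f w) → v = w) := by
  classical
  haveI : Fintype C := Fintype.ofFinite C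
  set a := 2 ^ (m - 1) with ha
  have ha1 : 1 ≤ a := Nat.one_le_two_pow
  set n := 2 ^ m with hn
  have hn2a : n = 2 * a := by
    rw [hn, ha, ← pow_succ']
    congr 1
    omega
  have cardC : Fintype.card C = 2 * n := by
    have b := Module.finBasisOfFinrankEq (ZMod 2) C hdim
    rw [Module.card_fintype b]
    simp [hn, pow_succ']
  have cardV : Fintype.card (Fin m → ZMod 2) = n := by simp [hn]
  -- weight as a sum of indicators
  have hwt : ∀ f : (Fin m → ZMod 2) → ZMod 2,
      hammingNorm f = ∑ v : Fin m → ZMod 2, (if f v = 1 then 1 else 0) := by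
    intro f
    rw [hammingNorm, Finset.card_filter]
    refine Finset.sum_congr rfl fun v _ => ?_
    rcases zmod2_cases (f v) with h | h <;> simp [h]
  -- the N numbers
  set N : (Fin m → ZMod 2) → ℕ :=
    fun v => (Finset.univ.filter (fun f : C => (f : (Fin m → ZMod 2) → ZMod 2) v = 1)).card
    with hN
  have hNsub : ∀ v, N v = Fintype.card {f : C // (f : (Fin m → ZMod 2) → ZMod 2) v = 1} := by
    intro v; rw [Fintype.card_subtype]
  -- evaluation homomorphism
  have hNval : ∀ v : Fin m → ZMod 2, (∃ f ∈ C, f v = 1) → N v = n := by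
    intro v ⟨f, hfC, hfv⟩
    set φ : C →+ ZMod 2 :=
      { toFun := fun g => (g : (Fin m → ZMod 2) → ZMod 2) v
        map_zero' := rfl
        map_add' := fun _ _ => rfl } with hφ
    have hsurj : Function.Surjective φ := by
      intro y
      rcases zmod2_cases y with h | h
      · exact ⟨0, by simp [hφ, h]⟩
      · exact ⟨⟨f, hfC⟩, by simp [hφ, h, hfv]⟩
    have := fiber_mul φ hsurj 1
    rw [ZMod.card] at this
    have hNv : N v = Fintype.card {x : C // φ x = 1} := hNsub v
    rw [← hNv] at this
    rw [cardC] at this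
    omega
  have hNzero : ∀ v : Fin m → ZMod 2, ¬(∃ f ∈ C, f v = 1) → N v = 0 := by
    intro v hv
    rw [hN]
    simp only [Finset.card_eq_zero, Finset.filter_eq_empty_iff]
    intro f _
    exact fun h => hv ⟨f, f.2, h⟩
  -- total weight
  set S : ℕ := ∑ f : C, hammingNorm (f : (Fin m → ZMod 2) → ZMod 2) with hS
  have hSN : S = ∑ v : Fin m → ZMod 2, N v := by
    rw [hS]
    simp_rw [hwt, hN, Finset.card_filter]
    exact Finset.sum_comm
  -- lower bound on S
  have hSlow : (2 * n - 1) * a ≤ S := by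
    have h0 : (0 : C) ∈ (Finset.univ : Finset C) := Finset.mem_univ _
    have := Finset.sum_eq_sum_sdiff_singleton_add h0
      (fun f : C => hammingNorm (f : (Fin m → ZMod 2) → ZMod 2))
    rw [hS, this]
    have hz : hammingNorm ((0 : C) : (Fin m → ZMod 2) → ZMod 2) = 0 := by simp
    rw [hz, add_zero]
    have hcard : (Finset.univ \ {(0 : C)}).card = 2 * n - 1 := by
      rw [Finset.card_sdiff_of_subset (by simp), Finset.card_univ, cardC]; simp
    calc (2 * n - 1) * a = (Finset.univ \ {(0 : C)}).card • a := by rw [hcard]; simp [mul_comm]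
      _ ≤ _ := by
          apply Finset.card_nsmul_le_sum
          intro f hf
          have hf0 : f ≠ 0 := by
            simp only [Finset.mem_sdiff, Finset.mem_singleton] at hf
            exact hf.2
          exact hmin f f.2 (by simpa using hf0)
  -- every coordinate is good
  have hgood : ∀ v : Fin m → ZMod 2, ∃ f ∈ C, f v = 1 := by
    by_contra hbad
    push_neg at hbad
    obtain ⟨v₀, hv₀⟩ := hbad
    have hN0 : N v₀ = 0 := hNzero v₀ (by push_neg; exact hv₀)
    have hub : S ≤ (n - 1) * n := by
      rw [hSN]
      have := Finset.sum_eq_sum_sdiff_singleton_add (Finset.mem_univ v₀) N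
      rw [this, hN0, add_zero]
      calc ∑ v ∈ Finset.univ \ {v₀}, N v ≤ (Finset.univ \ {v₀}).card * n := by
            apply Finset.sum_le_card_nsmul
            intro v _
            rcases Classical.em (∃ f ∈ C, f v = 1) with h | h
            · exact le_of_eq (hNval v h)
            · rw [hNzero v h]; positivity
        _ = (n - 1) * n := by
            rw [Finset.card_sdiff_of_subset (by simp), Finset.card_univ, cardV, Finset.card_singleton]
  -- contradiction
    have h1 : (2 * n - 1) * a ≤ (n - 1) * n := le_trans hSlow hub
    rw [hn2a] at h1
    zify [show (1:ℕ) ≤ 2 * (2 * a) by omega, show (1:ℕ) ≤ 2 * a by omega] at h1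
    have ha1' : (1:ℤ) ≤ (a:ℤ) := by exact_mod_cast ha1
    nlinarith [h1, ha1']
  have hNall : ∀ v : Fin m → ZMod 2, N v = n := fun v => hNval v (hgood v)
  have hSval : S = n * n := by
    rw [hSN]
    simp [hNall, Finset.sum_const, cardV]
  -- squared weights
  have hQ1 : ∀ f : C, (hammingNorm (f : (Fin m → ZMod 2) → ZMod 2))^2
      = ∑ v : Fin m → ZMod 2, ∑ w : Fin m → ZMod 2,
          (if (f : (Fin m → ZMod 2) → ZMod 2) v = 1 ∧ (f : (Fin m → ZMod 2) → ZMod 2) w = 1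
            then 1 else 0) := by
    intro f
    rw [pow_two, hwt, Finset.sum_mul_sum]
    refine Finset.sum_congr rfl fun v _ => Finset.sum_congr rfl fun w _ => ?_
    by_cases h1 : (f : (Fin m → ZMod 2) → ZMod 2) v = 1 <;>
      by_cases h2 : (f : (Fin m → ZMod 2) → ZMod 2) w = 1 <;> simp [h1, h2]
  set M : (Fin m → ZMod 2) → (Fin m → ZMod 2) → ℕ := fun v w =>
    (Finset.univ.filter (fun f : C =>
      (f : (Fin m → ZMod 2) → ZMod 2) v = 1 ∧ (f : (Fin m → ZMod 2) → ZMod 2) w = 1)).card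
    with hM
  set Q : ℕ := ∑ f : C, (hammingNorm (f : (Fin m → ZMod 2) → ZMod 2))^2 with hQdef
  have hQM : Q = ∑ v : Fin m → ZMod 2, ∑ w : Fin m → ZMod 2, M v w := by
    rw [hQdef]
    simp_rw [hQ1]
    rw [Finset.sum_comm]
    refine Finset.sum_congr rfl fun v _ => ?_
    rw [Finset.sum_comm]
    refine Finset.sum_congr rfl fun w _ => ?_
    simp only [hM]
    rw [Finset.card_filter]
  -- values of M
  have hMeq : ∀ v w, (∀ f ∈ C, f v = f w) → M v w = n := by
    intro v w hvw
    have hMN : M v w = N v := by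
      simp only [hM, hN]
      congr 1
      apply Finset.filter_congr
      intro f _
      have hfw := hvw (f : (Fin m → ZMod 2) → ZMod 2) f.2
      constructor
      · exact fun h => h.1
      · exact fun h => ⟨h, by rw [← hfw]; exact h⟩
    rw [hMN, hNall]
  have hMne : ∀ v w, ¬(∀ f ∈ C, f v = f w) → M v w = a := by
    intro v w hvw
    push_neg at hvw
    obtain ⟨d, hdC, hd⟩ := hvw
    obtain ⟨f₁, hf₁C, hf₁⟩ := hgood v
    obtain ⟨f₂, hf₂C, hf₂⟩ := hgood w
    have h10 : ∃ f ∈ C, f v = 1 ∧ f w = 0 := by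
      rcases zmod2_cases (d v) with hdv | hdv <;> rcases zmod2_cases (d w) with hdw | hdw
      · exact absurd (hdv.trans hdw.symm) hd
      · -- d = (0,1) pattern; use f₁ possibly plus d
        rcases zmod2_cases (f₁ w) with hfw | hfw
        · exact ⟨f₁, hf₁C, hf₁, hfw⟩
        · refine ⟨f₁ + d, C.add_mem hf₁C hdC, ?_, ?_⟩ <;>
            simp [hf₁, hfw, hdv, hdw] <;> decide
      · exact ⟨d, hdC, hdv, hdw⟩
      · exact absurd (hdv.trans hdw.symm) hd
    have h01 : ∃ f ∈ C, f v = 0 ∧ f w = 1 := by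
      rcases zmod2_cases (d v) with hdv | hdv <;> rcases zmod2_cases (d w) with hdw | hdw
      · exact absurd (hdv.trans hdw.symm) hd
      · exact ⟨d, hdC, hdv, hdw⟩
      · rcases zmod2_cases (f₂ v) with hfv | hfv
        · exact ⟨f₂, hf₂C, hfv, hf₂⟩
        · refine ⟨f₂ + d, C.add_mem hf₂C hdC, ?_, ?_⟩ <;>
            simp [hf₂, hfv, hdv, hdw] <;> decide
      · exact absurd (hdv.trans hdw.symm) hd
    obtain ⟨g10, hg10C, hg10v, hg10w⟩ := h10
    obtain ⟨g01, hg01C, hg01v, hg01w⟩ := h01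
    set φ : C →+ ZMod 2 × ZMod 2 :=
      { toFun := fun g => ((g : (Fin m → ZMod 2) → ZMod 2) v, (g : (Fin m → ZMod 2) → ZMod 2) w)
        map_zero' := rfl
        map_add' := fun _ _ => rfl } with hφ
    have hsurj : Function.Surjective φ := by
      intro y
      obtain ⟨y1, y2⟩ := y
      rcases zmod2_cases y1 with h1 | h1 <;> rcases zmod2_cases y2 with h2 | h2
      · exact ⟨0, by simp [hφ, h1, h2]⟩
      · exact ⟨⟨g01, hg01C⟩, by simp [hφ, h1, h2, hg01v, hg01w]⟩
      · exact ⟨⟨g10, hg10C⟩, by simp [hφ, h1, h2, hg10v, hg10w]⟩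
      · refine ⟨⟨g10, hg10C⟩ + ⟨g01, hg01C⟩, ?_⟩
        simp [hφ, h1, h2, hg10v, hg10w, hg01v, hg01w]
    have hfib := fiber_mul φ hsurj (1, 1)
    have hc4 : Fintype.card (ZMod 2 × ZMod 2) = 4 := by simp
    rw [hc4, cardC] at hfib
    have hMsub : M v w = Fintype.card {f : C // φ f = (1, 1)} := by
      simp only [hM, Fintype.card_subtype]
      congr 1
      apply Finset.filter_congr
      intro f _
      simp [hφ, Prod.ext_iff]
    rw [← hMsub] at hfib
    omega
  -- the coincidence set
  set Pset : Finset ((Fin m → ZMod 2) × (Fin m → ZMod 2)) :=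
    Finset.univ.filter (fun p => ∀ f ∈ C, f p.1 = f p.2) with hPset
  have hPcard_le_sq : Pset.card ≤ n * n := by
    calc Pset.card ≤ (Finset.univ : Finset ((Fin m → ZMod 2) × (Fin m → ZMod 2))).card :=
          Finset.card_filter_le _ _
      _ = n * n := by rw [Finset.card_univ, Fintype.card_prod, cardV]
  have hQsplit : Q = Pset.card * n +
      (Finset.univ.filter (fun p : (Fin m → ZMod 2) × (Fin m → ZMod 2) =>
        ¬∀ f ∈ C, f p.1 = f p.2)).card * a := by
    rw [hQM, ← Finset.sum_product']
    have hval : ∀ p : (Fin m → ZMod 2) × (Fin m → ZMod 2),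
        M p.1 p.2 = if (∀ f ∈ C, f p.1 = f p.2) then n else a := by
      intro p
      by_cases h : ∀ f ∈ C, f p.1 = f p.2
      · rw [if_pos h, hMeq _ _ h]
      · rw [if_neg h, hMne _ _ h]
    rw [show (Finset.univ ×ˢ Finset.univ :
        Finset ((Fin m → ZMod 2) × (Fin m → ZMod 2))) = Finset.univ from
        Finset.univ_product_univ]
    rw [Finset.sum_congr rfl fun p _ => hval p, Finset.sum_ite, Finset.sum_const,
      Finset.sum_const, smul_eq_mul, smul_eq_mul, hPset]
  have hsplit : Pset.card +
      (Finset.univ.filter (fun p : (Fin m → ZMod 2) × (Fin m → ZMod 2) =>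
        ¬∀ f ∈ C, f p.1 = f p.2)).card = n * n := by
    rw [hPset]
    have h := Finset.card_filter_add_card_filter_not
      (s := (Finset.univ : Finset ((Fin m → ZMod 2) × (Fin m → ZMod 2))))
      (p := fun p => ∀ f ∈ C, f p.1 = f p.2)
    rwa [Finset.card_univ, Fintype.card_prod, cardV] at h
  have hQZ : (Q : ℤ) = Pset.card * n + ((n : ℤ) * n - Pset.card) * a := by
    have h1 : (Q : ℤ) = Pset.card * n +
        ((Finset.univ.filter (fun p : (Fin m → ZMod 2) × (Fin m → ZMod 2) =>
          ¬∀ f ∈ C, f p.1 = f p.2)).card : ℤ) * a := by exact_mod_cast hQsplit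
    have h2 : (Pset.card : ℤ) +
        ((Finset.univ.filter (fun p : (Fin m → ZMod 2) × (Fin m → ZMod 2) =>
          ¬∀ f ∈ C, f p.1 = f p.2)).card : ℤ) = (n : ℤ) * n := by exact_mod_cast hsplit
    rw [h1]
    linear_combination (a : ℤ) * h2
  have hPge : n ≤ Pset.card := by
    have hinj : Function.Injective (fun v : Fin m → ZMod 2 => (v, v)) := by
      intro x y h
      exact congrArg Prod.fst h
    calc n = (Finset.univ.image (fun v : Fin m → ZMod 2 => (v, v))).card := by
          rw [Finset.card_image_of_injective _ hinj, Finset.card_univ, cardV]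
      _ ≤ Pset.card := by
          apply Finset.card_le_card
          intro p hp
          simp only [Finset.mem_image] at hp
          obtain ⟨u, _, rfl⟩ := hp
          simp [hPset]
  -- the quadratic inequality, in ℤ
  have hwt_le : ∀ f : C, hammingNorm (f : (Fin m → ZMod 2) → ZMod 2) ≤ n := by
    intro f
    calc hammingNorm (f : (Fin m → ZMod 2) → ZMod 2)
        ≤ (Finset.univ : Finset (Fin m → ZMod 2)).card := Finset.card_filter_le _ _
      _ = n := by rw [Finset.card_univ, cardV]
  have hterm : ∀ f ∈ Finset.univ \ {(0 : C)},
      ((hammingNorm (f : (Fin m → ZMod 2) → ZMod 2) : ℤ)^2 + a * n)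
        ≤ (hammingNorm (f : (Fin m → ZMod 2) → ZMod 2) : ℤ) * (n + a) := by
    intro f hf
    have hf0 : f ≠ 0 := by
      simp only [Finset.mem_sdiff, Finset.mem_singleton] at hf
      exact hf.2
    have hlo : (a : ℤ) ≤ hammingNorm (f : (Fin m → ZMod 2) → ZMod 2) := by
      exact_mod_cast hmin _ f.2 (by simpa using hf0)
    have hhi : (hammingNorm (f : (Fin m → ZMod 2) → ZMod 2) : ℤ) ≤ n := by
      exact_mod_cast hwt_le f
    exact quad_term hlo hhi
  have hzero_wt : hammingNorm ((0 : C) : (Fin m → ZMod 2) → ZMod 2) = 0 := by simp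
  have hcard_s : (Finset.univ \ {(0 : C)}).card = 2 * n - 1 := by
    rw [Finset.card_sdiff_of_subset (by simp), Finset.card_univ, cardC]; simp
  have hsum_wt : ∑ f ∈ Finset.univ \ {(0 : C)},
      (hammingNorm (f : (Fin m → ZMod 2) → ZMod 2) : ℤ) = (S : ℤ) := by
    rw [hS]
    push_cast
    rw [Finset.sum_eq_sum_sdiff_singleton_add (Finset.mem_univ (0 : C))
      (fun f : C => (hammingNorm (f : (Fin m → ZMod 2) → ZMod 2) : ℤ))]
    simp [hzero_wt]
  have hsum_wt2 : ∑ f ∈ Finset.univ \ {(0 : C)},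
      (hammingNorm (f : (Fin m → ZMod 2) → ZMod 2) : ℤ)^2 = (Q : ℤ) := by
    rw [hQdef]
    push_cast
    rw [Finset.sum_eq_sum_sdiff_singleton_add (Finset.mem_univ (0 : C))
      (fun f : C => (hammingNorm (f : (Fin m → ZMod 2) → ZMod 2) : ℤ)^2)]
    simp [hzero_wt]
  have hbig : (Q : ℤ) + (2 * n - 1) * (a * n) ≤ (S : ℤ) * (n + a) := by
    have h := Finset.sum_le_sum hterm
    rw [Finset.sum_add_distrib, Finset.sum_const, hsum_wt2] at h
    rw [← Finset.sum_mul, hsum_wt] at h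
    rw [hcard_s] at h
    have h2n : (1:ℕ) ≤ 2 * n := by rw [hn2a]; linarith [ha1]
    push_cast [h2n, nsmul_eq_mul] at h ⊢
    linarith
  -- conclude P = n
  have hn2a' : (n : ℤ) = 2 * a := by exact_mod_cast hn2a
  have ha1' : (1 : ℤ) ≤ (a : ℤ) := by exact_mod_cast ha1
  have hSZ : (S : ℤ) = (n : ℤ) * n := by exact_mod_cast hSval
  have hPle : Pset.card ≤ n := by
    have hb : (Pset.card : ℤ) * (2 * (a:ℤ)) + ((2 * (a:ℤ)) * (2 * a) - Pset.card) * a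
        + (2 * (2 * (a:ℤ)) - 1) * (a * (2 * a)) ≤ (2 * (a:ℤ)) * (2 * a) * (2 * a + a) := by
      rw [hQZ, hSZ, hn2a'] at hbig
      linarith [hbig]
    have := P_le ha1' hb
    rw [← hn2a'] at this
    exact_mod_cast this
  have hPeq : Pset.card = n := le_antisymm hPle hPge
  -- injectivity of evaluation
  have hinj : ∀ v w : Fin m → ZMod 2, (∀ f ∈ C, f v = f w) → v = w := by
    intro v w hvw
    have hinj' : Function.Injective (fun v : Fin m → ZMod 2 => (v, v)) := by
      intro x y h
      exact congrArg Prod.fst h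
    have hsub : Finset.univ.image (fun v : Fin m → ZMod 2 => (v, v)) ⊆ Pset := by
      intro p hp
      simp only [Finset.mem_image] at hp
      obtain ⟨u, _, rfl⟩ := hp
      simp [hPset]
    have heq : Finset.univ.image (fun v : Fin m → ZMod 2 => (v, v)) = Pset := by
      apply Finset.eq_of_subset_of_card_le hsub
      rw [Finset.card_image_of_injective _ hinj', Finset.card_univ, cardV, hPeq]
    have hmem : (v, w) ∈ Pset := by
      rw [hPset]
      simp only [Finset.mem_filter, Finset.mem_univ, true_and]
      exact hvw
    rw [← heq] at hmem
    simp only [Finset.mem_image] at hmem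
    obtain ⟨u, _, hu⟩ := hmem
    have h1 := congrArg Prod.fst hu
    have h2 := congrArg Prod.snd hu
    simp at h1 h2
    rw [← h1, ← h2]
  -- equality case: all nonzero weights are a or n
  have hdich : ∀ f : C, f ≠ 0 →
      hammingNorm (f : (Fin m → ZMod 2) → ZMod 2) = a ∨
      hammingNorm (f : (Fin m → ZMod 2) → ZMod 2) = n := by
    have heq0 : ∑ f ∈ Finset.univ \ {(0 : C)},
        ((hammingNorm (f : (Fin m → ZMod 2) → ZMod 2) : ℤ) * (n + a)
          - ((hammingNorm (f : (Fin m → ZMod 2) → ZMod 2) : ℤ)^2 + a * n)) = 0 := by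
      rw [Finset.sum_sub_distrib, Finset.sum_add_distrib, Finset.sum_const, hsum_wt2,
        ← Finset.sum_mul, hsum_wt, hcard_s]
      rw [hQZ, hPeq, hSZ]
      have h2n : (1:ℕ) ≤ 2 * n := by rw [hn2a]; linarith [ha1]
      push_cast [h2n, nsmul_eq_mul]
      rw [hn2a']
      ring
    have hall := (Finset.sum_eq_zero_iff_of_nonneg
      (fun f hf => sub_nonneg.mpr (hterm f hf))).mp heq0
    intro f hf0
    have hfs : f ∈ Finset.univ \ {(0 : C)} :=
      Finset.mem_sdiff.mpr ⟨Finset.mem_univ f, fun h => hf0 (Finset.mem_singleton.mp h)⟩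
    have hthis := hall f hfs
    obtain ⟨wt, hwt'⟩ : ∃ x : ℕ, hammingNorm (f : (Fin m → ZMod 2) → ZMod 2) = x := ⟨_, rfl⟩
    rw [hwt'] at hthis ⊢
    have hfac : ((wt : ℤ) - a) * ((n : ℤ) - wt) = 0 := by linear_combination hthis
    rcases mul_eq_zero.mp hfac with h | h
    · left
      have : (wt : ℤ) = a := by linarith
      exact_mod_cast this
    · right
      have : (wt : ℤ) = n := by linarith
      exact_mod_cast this
  -- the all-ones vector is in C
  have hone : (fun _ => (1 : ZMod 2)) ∈ C := by
    have hex : ∃ f : C, hammingNorm (f : (Fin m → ZMod 2) → ZMod 2) = n := by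
      by_contra hno
      push_neg at hno
      have hall_a : ∀ f ∈ Finset.univ \ {(0 : C)},
          hammingNorm (f : (Fin m → ZMod 2) → ZMod 2) = a := by
        intro f hf
        have hf0 : f ≠ 0 := by
          simp only [Finset.mem_sdiff, Finset.mem_singleton] at hf
          exact hf.2
        rcases hdich f hf0 with h | h
        · exact h
        · exact absurd h (hno f)
      have hSsum : S = (2 * n - 1) * a := by
        rw [hS, Finset.sum_eq_sum_sdiff_singleton_add (Finset.mem_univ (0 : C))
          (fun f : C => hammingNorm (f : (Fin m → ZMod 2) → ZMod 2))]
        rw [Finset.sum_congr rfl (fun f hf => hall_a f hf), Finset.sum_const, hcard_s]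
        simp [hzero_wt, mul_comm]
      rw [hSval, hn2a] at hSsum
      zify [show (1:ℕ) ≤ 2 * (2 * a) by linarith [ha1]] at hSsum
      nlinarith [hSsum, ha1']
    obtain ⟨f, hf⟩ := hex
    have hfull : ∀ v, (f : (Fin m → ZMod 2) → ZMod 2) v ≠ 0 := by
      have hcf : (Finset.univ.filter
          (fun v => (f : (Fin m → ZMod 2) → ZMod 2) v ≠ 0)).card
          = (Finset.univ : Finset (Fin m → ZMod 2)).card := by
        rw [Finset.card_univ, cardV]
        exact hf
      intro v
      exact Finset.filter_card_eq hcf v (Finset.mem_univ v)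
    have : (f : (Fin m → ZMod 2) → ZMod 2) = fun _ => 1 := by
      funext v
      rcases zmod2_cases ((f : (Fin m → ZMod 2) → ZMod 2) v) with h | h
      · exact absurd h (hfull v)
      · exact h
    rw [← this]
    exact f.2
  exact ⟨hone, hinj⟩

theorem first_order_RM_unique
    (m : ℕ) (hm : 1 ≤ m)
    (C : Submodule (ZMod 2) ((Fin m → ZMod 2) → ZMod 2))
    (hdim : Module.finrank (ZMod 2) C = m + 1)
    (hmin : ∀ f ∈ C, f ≠ 0 → 2 ^ (m - 1) ≤ hammingNorm f) :
    ∃ σ : Equiv.Perm (Fin m → ZMod 2),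
      (C : Set ((Fin m → ZMod 2) → ZMod 2)) =
        (fun f => f ∘ σ) '' (ReedMuller1 m : Set ((Fin m → ZMod 2) → ZMod 2)) := by
  classical
  obtain ⟨hone, hinj⟩ := key_lemma m hm C hdim hmin
  set oneC : C := ⟨fun _ => 1, hone⟩ with honeC
  have honeC0 : oneC ≠ 0 := by
    intro h
    have h2 := congrArg Subtype.val h
    have h3 := congrFun h2 (fun _ => 0)
    exact one_ne_zero h3
  obtain ⟨W, hW⟩ := Submodule.exists_isCompl (Submodule.span (ZMod 2) {oneC})
  have hrank1 : Module.finrank (ZMod 2) (Submodule.span (ZMod 2) {oneC}) = 1 := by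
    rw [← finrank_span_singleton (K := ZMod 2) honeC0]
  have hrankW : Module.finrank (ZMod 2) W = m := by
    have h := Submodule.finrank_add_eq_of_isCompl hW
    rw [hrank1, hdim] at h
    omega
  let b := Module.finBasisOfFinrankEq (ZMod 2) W hrankW
  set g : Fin m → ((Fin m → ZMod 2) → ZMod 2) := fun i => ((b i : C) : _) with hg
  have hCspan : C = Submodule.span (ZMod 2)
      ({fun _ => (1 : ZMod 2)} ∪ Set.range g) := by
    have hWspan : W = Submodule.span (ZMod 2) (Set.range (fun i => (b i : C))) := by
      conv_lhs => rw [← Submodule.map_subtype_top W, ← b.span_eq]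
      rw [Submodule.map_span]
      congr 1
      rw [← Set.range_comp]
      rfl
    calc C = Submodule.map C.subtype ⊤ := (Submodule.map_subtype_top C).symm
      _ = Submodule.map C.subtype (Submodule.span (ZMod 2) {oneC} ⊔ W) := by
          rw [hW.codisjoint.eq_top]
      _ = Submodule.map C.subtype (Submodule.span (ZMod 2) {oneC})
            ⊔ Submodule.map C.subtype W := Submodule.map_sup _ _ _
      _ = Submodule.span (ZMod 2) ({fun _ => (1 : ZMod 2)} ∪ Set.range g) := by
          rw [hWspan, Submodule.map_span, Submodule.map_span, Set.image_singleton,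
            ← Set.range_comp, Submodule.span_union]
          rfl
  set τ : (Fin m → ZMod 2) → (Fin m → ZMod 2) := fun v i => g i v with hτ
  have hτinj : Function.Injective τ := by
    intro v w hvw
    apply hinj v w
    intro f hf
    rw [hCspan] at hf
    induction hf using Submodule.span_induction with
    | mem x hx =>
        rcases hx with hx | ⟨i, rfl⟩
        · rw [Set.mem_singleton_iff] at hx
          rw [hx]
        · exact congrFun hvw i
    | zero => rfl
    | add x y hx hy ihx ihy => simp [ihx, ihy]
    | smul c x hx ihx => simp [ihx]
  have hτbij : Function.Bijective τ := Finite.injective_iff_bijective.mp hτinj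
  refine ⟨Equiv.ofBijective τ hτbij, ?_⟩
  have hmap : Submodule.map (LinearMap.funLeft (ZMod 2) (ZMod 2) τ) (ReedMuller1 m) = C := by
    rw [ReedMuller1, Submodule.map_span, hCspan]
    congr 1
    rw [Set.image_union, Set.image_singleton, ← Set.range_comp]
    rfl
  calc (C : Set ((Fin m → ZMod 2) → ZMod 2))
      = (Submodule.map (LinearMap.funLeft (ZMod 2) (ZMod 2) τ) (ReedMuller1 m) :
          Set ((Fin m → ZMod 2) → ZMod 2)) := by rw [hmap]
    _ = (fun f => f ∘ (Equiv.ofBijective τ hτbij)) ''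
          (ReedMuller1 m : Set ((Fin m → ZMod 2) → ZMod 2)) :=
        Submodule.map_coe _ _
end

section
/- Let m ≥ 1 and let C be an F₂-linear subspace of (Fin (2^m − 1) → ZMod 2) of dimension m such that every nonzero element of C has Hamming weight at least 2^(m-1). Then some nonzero element of C has Hamming weight exactly 2^(m-1); i.e. no binary linear code of length 2^m − 1 and dimension m has minimum distance greater than 2^(m-1). -/
theorem simplex_length_dim_min_distance_attained
    (m : ℕ) (hm : 1 ≤ m)
    (C : Submodule (ZMod 2) (Fin (2 ^ m - 1) → ZMod 2))
    (hdim : Module.finrank (ZMod 2) C = m)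
    (hmin : ∀ x ∈ C, x ≠ 0 → 2 ^ (m - 1) ≤ hammingNorm x) :
    ∃ x ∈ C, x ≠ 0 ∧ hammingNorm x = 2 ^ (m - 1) := by
  classical
  by_contra hcon
  push_neg at hcon
  haveI : Fintype C := Fintype.ofFinite C
  have h2m : 2 ≤ 2 ^ m := by
    calc 2 = 2 ^ 1 := rfl
    _ ≤ 2 ^ m := Nat.pow_le_pow_right (by norm_num) hm
  have hpow : 2 ^ (m - 1) * 2 = 2 ^ m := by
    rw [← pow_succ]
    congr 1
    omega
  have hcard : Fintype.card C = 2 ^ m := by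
    have := Module.card_eq_pow_finrank (K := ZMod 2) (V := C)
    rwa [hdim, ZMod.card] at this
  have hone : ∀ x : ZMod 2, x ≠ 0 → x = 1 := by decide
  have h110 : (1 + 1 : ZMod 2) = 0 := by decide
  have hself : ∀ x : C, x + x = 0 := by
    intro x
    rw [← two_smul (ZMod 2) x]
    have : (2 : ZMod 2) = 0 := by decide
    rw [this, zero_smul]
  -- column counts
  have hcol : ∀ i : Fin (2 ^ m - 1),
      (Finset.univ.filter (fun c : C => (c : Fin (2 ^ m - 1) → ZMod 2) i ≠ 0)).card
        ≤ 2 ^ (m - 1) := by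
    intro i
    set A := Finset.univ.filter (fun c : C => (c : Fin (2 ^ m - 1) → ZMod 2) i ≠ 0) with hA
    set B := Finset.univ.filter (fun c : C => ¬ (c : Fin (2 ^ m - 1) → ZMod 2) i ≠ 0) with hB
    rcases A.eq_empty_or_nonempty with h | ⟨c₀, hc₀⟩
    · simp [h]
    · have hc₀i : (c₀ : Fin (2 ^ m - 1) → ZMod 2) i ≠ 0 := (Finset.mem_filter.mp hc₀).2
      have hAB : A.card = B.card := by
        apply Finset.card_bij (fun c _ => c + c₀)
        · intro c hc
          have hci : (c : Fin (2 ^ m - 1) → ZMod 2) i ≠ 0 := (Finset.mem_filter.mp hc).2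
          simp only [hB, Finset.mem_filter, Finset.mem_univ, true_and, not_not]
          show ((c : Fin (2 ^ m - 1) → ZMod 2) + (c₀ : Fin (2 ^ m - 1) → ZMod 2)) i = 0
          rw [Pi.add_apply, hone _ hci, hone _ hc₀i, h110]
        · intro a _ b _ hab
          exact add_right_cancel hab
        · intro b hb
          have hbi : (b : Fin (2 ^ m - 1) → ZMod 2) i = 0 := by
            have := (Finset.mem_filter.mp hb).2
            simpa using this
          refine ⟨b + c₀, ?_, by rw [add_assoc, hself, add_zero]⟩
          simp only [hA, Finset.mem_filter, Finset.mem_univ, true_and]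
          show ((b : Fin (2 ^ m - 1) → ZMod 2) + (c₀ : Fin (2 ^ m - 1) → ZMod 2)) i ≠ 0
          simp [hbi, hone _ hc₀i]
      have hsum : A.card + B.card = 2 ^ m := by
        rw [hA, hB, Finset.card_filter_add_card_filter_not]
        simpa using hcard
      omega
  -- total weight, upper bound
  have hupper : ∑ c : C, hammingNorm (c : Fin (2 ^ m - 1) → ZMod 2)
      ≤ (2 ^ m - 1) * 2 ^ (m - 1) := by
    have heq : ∑ c : C, hammingNorm (c : Fin (2 ^ m - 1) → ZMod 2)
        = ∑ i : Fin (2 ^ m - 1),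
            (Finset.univ.filter (fun c : C => (c : Fin (2 ^ m - 1) → ZMod 2) i ≠ 0)).card := by
      simp only [hammingNorm, Finset.card_filter]
      exact Finset.sum_comm
    rw [heq]
    calc ∑ i : Fin (2 ^ m - 1),
        (Finset.univ.filter (fun c : C => (c : Fin (2 ^ m - 1) → ZMod 2) i ≠ 0)).card
        ≤ ∑ _i : Fin (2 ^ m - 1), 2 ^ (m - 1) := Finset.sum_le_sum fun i _ => hcol i
      _ = (2 ^ m - 1) * 2 ^ (m - 1) := by simp [Finset.sum_const, mul_comm]
  -- lower bound
  have hlower : (2 ^ m - 1) * (2 ^ (m - 1) + 1)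
      ≤ ∑ c : C, hammingNorm (c : Fin (2 ^ m - 1) → ZMod 2) := by
    have hsub : (Finset.univ.filter (fun c : C => c ≠ 0)) ⊆ Finset.univ := Finset.filter_subset _ _
    have hNcard : (Finset.univ.filter (fun c : C => c ≠ 0)).card = 2 ^ m - 1 := by
      rw [Finset.filter_ne', Finset.card_erase_of_mem (Finset.mem_univ _)]
      simp [hcard]
    calc (2 ^ m - 1) * (2 ^ (m - 1) + 1)
        = ∑ _c ∈ Finset.univ.filter (fun c : C => c ≠ 0), (2 ^ (m - 1) + 1) := by
          simp [Finset.sum_const, hNcard, mul_comm]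
      _ ≤ ∑ c ∈ Finset.univ.filter (fun c : C => c ≠ 0),
            hammingNorm (c : Fin (2 ^ m - 1) → ZMod 2) := by
          apply Finset.sum_le_sum
          intro c hc
          have hc0 : c ≠ 0 := (Finset.mem_filter.mp hc).2
          have hv0 : (c : Fin (2 ^ m - 1) → ZMod 2) ≠ 0 := by
            simpa [Submodule.coe_eq_zero] using hc0
          have h1 := hmin _ c.2 hv0
          have h2 := hcon _ c.2 hv0
          omega
      _ ≤ ∑ c : C, hammingNorm (c : Fin (2 ^ m - 1) → ZMod 2) :=
          Finset.sum_le_sum_of_subset hsub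
  have := le_trans hlower hupper
  exact absurd this (by
    have h1 : 0 < 2 ^ m - 1 := by omega
    rw [Nat.mul_add, Nat.mul_one]
    exact Nat.not_le.mpr (Nat.lt_add_of_pos_right h1))
end

section
/- (Uniqueness of the simplex weight distribution.) Let m ≥ 1 and let C be an F₂-linear subspace of (Fin (2^m − 1) → ZMod 2) of dimension m such that every nonzero element of C has Hamming weight at least 2^(m-1). Then every nonzero element of C has Hamming weight exactly 2^(m-1); i.e. any binary linear [2^m − 1, m, 2^(m-1)] code has weight enumerator 1 + (2^m − 1)·t^(2^(m-1)) and is the simplex code. -/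
theorem simplex_weight_distribution_unique
    (m : ℕ) (hm : 1 ≤ m)
    (C : Submodule (ZMod 2) (Fin (2 ^ m - 1) → ZMod 2))
    (hdim : Module.finrank (ZMod 2) C = m)
    (hmin : ∀ x ∈ C, x ≠ 0 → 2 ^ (m - 1) ≤ hammingNorm x) :
    ∀ x ∈ C, x ≠ 0 → hammingNorm x = 2 ^ (m - 1) := by
  classical
  have : Fintype C := Fintype.ofFinite C
  have hcard : Fintype.card C = 2 ^ m := by
    rw [Module.card_eq_pow_finrank (K := ZMod 2) (V := C), ZMod.card, hdim]
  have hone : ∀ a : ZMod 2, a ≠ 0 → a = 1 := by decide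
  set N := 2 ^ (m - 1) with hN
  have h2N : 2 * N = 2 ^ m := by
    rw [hN, ← pow_succ']
    congr 1
    omega
  -- per-coordinate count bound
  have hcoord : ∀ i : Fin (2 ^ m - 1),
      (Finset.univ.filter (fun c : C => (c : Fin (2 ^ m - 1) → ZMod 2) i ≠ 0)).card ≤ N := by
    intro i
    set A := Finset.univ.filter (fun c : C => (c : Fin (2 ^ m - 1) → ZMod 2) i ≠ 0) with hA
    set B := Finset.univ.filter (fun c : C => (c : Fin (2 ^ m - 1) → ZMod 2) i = 0) with hB
    have hAB : A.card + B.card = 2 ^ m := by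
      have h := Finset.card_filter_add_card_filter_not
        (s := (Finset.univ : Finset C))
        (p := fun c : C => (c : Fin (2 ^ m - 1) → ZMod 2) i = 0)
      rw [Finset.card_univ, hcard] at h
      rw [hA, hB, add_comm]
      simpa using h
    have hle : A.card ≤ B.card := by
      rcases A.eq_empty_or_nonempty with h | ⟨c₀, hc₀⟩
      · simp [h]
      · rw [hA, Finset.mem_filter] at hc₀
        apply Finset.card_le_card_of_injOn (fun c => c + c₀)
        · intro c hc
          rw [Finset.mem_coe] at hc ⊢
          rw [Finset.mem_filter] at hc
          rw [hB, Finset.mem_filter]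
          refine ⟨Finset.mem_univ _, ?_⟩
          have h1 : (c : Fin (2 ^ m - 1) → ZMod 2) i = 1 := hone _ hc.2
          have h2 : (c₀ : Fin (2 ^ m - 1) → ZMod 2) i = 1 := hone _ hc₀.2
          show ((c + c₀ : C) : Fin (2 ^ m - 1) → ZMod 2) i = 0
          push_cast
          rw [Pi.add_apply, h1, h2]
          exact (by decide : (1 : ZMod 2) + 1 = 0)
        · intro a _ b _ hab
          simpa using congrArg (fun c => c + (-c₀)) hab
    omega
  -- total weight bound
  set T := ∑ c : C, hammingNorm (c : Fin (2 ^ m - 1) → ZMod 2) with hT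
  have hTle : T ≤ (2 ^ m - 1) * N := by
    have : T = ∑ i : Fin (2 ^ m - 1),
        (Finset.univ.filter (fun c : C => (c : Fin (2 ^ m - 1) → ZMod 2) i ≠ 0)).card := by
      rw [hT]
      simp only [hammingNorm, Finset.card_filter]
      rw [Finset.sum_comm]
    rw [this]
    calc ∑ i : Fin (2 ^ m - 1), _ ≤ ∑ _i : Fin (2 ^ m - 1), N :=
          Finset.sum_le_sum (fun i _ => hcoord i)
      _ = (2 ^ m - 1) * N := by simp [mul_comm]
  -- conclude
  intro x hx hx0
  by_contra hne
  have hgt : N < hammingNorm x := lt_of_le_of_ne (hmin x hx hx0) (Ne.symm hne)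
  set s := (Finset.univ : Finset C).erase 0 with hs
  have hscard : s.card = 2 ^ m - 1 := by
    rw [hs, Finset.card_erase_of_mem (Finset.mem_univ _), Finset.card_univ, hcard]
  have hxs : (⟨x, hx⟩ : C) ∈ s := by
    rw [hs, Finset.mem_erase]
    exact ⟨fun h => hx0 (by simpa using congrArg Subtype.val h), Finset.mem_univ _⟩
  have hlt : ∑ _c ∈ s, N < ∑ c ∈ s, hammingNorm (c : Fin (2 ^ m - 1) → ZMod 2) := by
    apply Finset.sum_lt_sum
    · intro c hc
      rw [hs, Finset.mem_erase] at hc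
      exact hmin c c.2 fun h => hc.1 (Subtype.ext h)
    · exact ⟨⟨x, hx⟩, hxs, hgt⟩
  have hsum : ∑ c ∈ s, hammingNorm (c : Fin (2 ^ m - 1) → ZMod 2) = T := by
    rw [hT, hs]
    apply Finset.sum_erase
    rw [ZeroMemClass.coe_zero, hammingNorm_zero]
  rw [hsum, Finset.sum_const, hscard, smul_eq_mul] at hlt
  omega
end

section
/- Let m ≥ 2 and let C be an F₂-linear subspace of (Fin (2^m − 1) → ZMod 2) of dimension m such that every nonzero element of C has Hamming weight at least 2^(m-1). Let D = { x : Fin (2^m − 1) → ZMod 2 | ∀ c ∈ C, ∑ i, x i * c i = 0 } be the dual code of C. Then every nonzero element of D has Hamming weight at least 3; i.e. the dual code of any binary linear [2^m − 1, m, 2^(m-1)] code has minimum distance at least 3 (and is hence a perfect single-error-correcting code). -/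
open Finset

theorem zmod2_eq_one {a : ZMod 2} (h : a ≠ 0) : a = 1 := by revert h; revert a; decide

theorem zmod2_add_eq_zero {a b : ZMod 2} (h : a + b = 0) (ha : a = 0) : b = 0 := by
  revert h ha; revert a b; decide

theorem colA {n : ℕ} (K : Submodule (ZMod 2) (Fin n → ZMod 2))
    [DecidablePred (· ∈ K)] (i : Fin n) :
    (univ.filter (fun c : Fin n → ZMod 2 => c ∈ K ∧ c i ≠ 0)).card ≤
    (univ.filter (fun c : Fin n → ZMod 2 => c ∈ K ∧ c i = 0)).card := by
  set A := univ.filter (fun c : Fin n → ZMod 2 => c ∈ K ∧ c i ≠ 0) with hA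
  set B := univ.filter (fun c : Fin n → ZMod 2 => c ∈ K ∧ c i = 0) with hB
  rcases A.eq_empty_or_nonempty with h | ⟨c₀, hc₀⟩
  · simp [h]
  · simp only [hA, mem_filter, mem_univ, true_and] at hc₀
    apply Finset.card_le_card_of_injOn (fun c => c + c₀)
    · intro c hc
      simp only [hA, mem_coe, mem_filter, mem_univ, true_and] at hc
      simp only [hB, mem_coe, mem_filter, mem_univ, true_and]
      refine ⟨K.add_mem hc.1 hc₀.1, ?_⟩
      have : (c + c₀) i = c i + c₀ i := rfl
      rw [this, zmod2_eq_one hc.2, zmod2_eq_one hc₀.2]; decide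
    · intro a _ b _ h
      simpa using add_right_cancel h

theorem counting {n : ℕ} (K : Submodule (ZMod 2) (Fin n → ZMod 2)) [DecidablePred (· ∈ K)]
    (S : Finset (Fin n)) (w : ℕ)
    (hS : ∀ c ∈ K, ∀ i ∈ S, c i = 0)
    (hw : ∀ c ∈ K, c ≠ 0 → w ≤ hammingNorm c) :
    2 * (((univ.filter (· ∈ K)).card - 1) * w) ≤
      (n - S.card) * (univ.filter (· ∈ K)).card := by
  set Ks := univ.filter (· ∈ K) with hKs
  set N := Ks.card with hN
  have hmemKs : ∀ c, c ∈ Ks ↔ c ∈ K := by intro c; simp [hKs]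
  have hdc : ∑ c ∈ Ks, hammingNorm c
      = ∑ i : Fin n, (Ks.filter (fun c => c i ≠ 0)).card := by
    have : ∀ c : Fin n → ZMod 2, hammingNorm c = ∑ i : Fin n, if c i ≠ 0 then 1 else 0 := by
      intro c; rw [hammingNorm]; rw [Finset.card_filter]
    simp_rw [this, Finset.card_filter]
    exact Finset.sum_comm
  have hlow : (N - 1) * w ≤ ∑ c ∈ Ks, hammingNorm c := by
    have h0 : (0 : Fin n → ZMod 2) ∈ Ks := by simp [hKs, K.zero_mem]
    calc (N - 1) * w = (Ks.erase 0).card * w := by rw [Finset.card_erase_of_mem h0]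
    _ ≤ ∑ c ∈ Ks.erase 0, hammingNorm c := by
        have := Finset.card_nsmul_le_sum (Ks.erase 0) hammingNorm w (fun c hc => by
          have h1 := Finset.ne_of_mem_erase hc
          have h2 := (hmemKs c).mp (Finset.mem_of_mem_erase hc)
          exact hw c h2 h1)
        simpa [smul_eq_mul] using this
    _ ≤ ∑ c ∈ Ks, hammingNorm c := Finset.sum_le_sum_of_subset (Finset.erase_subset _ _)
  have hcolS : ∀ i ∈ S, (Ks.filter (fun c => c i ≠ 0)).card = 0 := by
    intro i hi
    rw [Finset.card_eq_zero, Finset.filter_eq_empty_iff]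
    intro c hc
    simp [hS c ((hmemKs c).mp hc) i hi]
  have hcol : ∀ i : Fin n, 2 * (Ks.filter (fun c => c i ≠ 0)).card ≤ N := by
    intro i
    have heq : Ks.filter (fun c => c i ≠ 0)
        = univ.filter (fun c : Fin n → ZMod 2 => c ∈ K ∧ c i ≠ 0) := by
      rw [hKs, Finset.filter_filter]
    have heq2 : Ks.filter (fun c => ¬ c i ≠ 0)
        = univ.filter (fun c : Fin n → ZMod 2 => c ∈ K ∧ c i = 0) := by
      rw [hKs, Finset.filter_filter]
      simp only [not_not]
    have hsplit : (Ks.filter (fun c => c i ≠ 0)).card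
        + (Ks.filter (fun c => ¬ c i ≠ 0)).card = N := by
      rw [hN]
      exact Finset.card_filter_add_card_filter_not _
    rw [heq2] at hsplit
    have hAB := colA K i
    rw [← heq] at hAB
    calc 2 * (Ks.filter (fun c => c i ≠ 0)).card
        = (Ks.filter (fun c => c i ≠ 0)).card + (Ks.filter (fun c => c i ≠ 0)).card :=
          two_mul _
      _ ≤ (Ks.filter (fun c => c i ≠ 0)).card
          + (univ.filter (fun c : Fin n → ZMod 2 => c ∈ K ∧ c i = 0)).card :=
          Nat.add_le_add_left hAB _
      _ = N := hsplit
  have hsum : ∑ i : Fin n, (Ks.filter (fun c => c i ≠ 0)).card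
      = ∑ i ∈ univ \ S, (Ks.filter (fun c => c i ≠ 0)).card := by
    rw [← Finset.sum_subset (Finset.subset_univ (univ \ S))]
    intro i _ hi
    simp only [Finset.mem_sdiff, Finset.mem_univ, true_and, not_not] at hi
    exact hcolS i hi
  have hup : 2 * ∑ i ∈ univ \ S, (Ks.filter (fun c => c i ≠ 0)).card ≤ (n - S.card) * N := by
    rw [Finset.mul_sum]
    calc ∑ i ∈ univ \ S, 2 * (Ks.filter (fun c => c i ≠ 0)).card
        ≤ ∑ _i ∈ univ \ S, N := Finset.sum_le_sum (fun i _ => hcol i)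
      _ = (univ \ S).card * N := by rw [Finset.sum_const, smul_eq_mul]
      _ = (n - S.card) * N := by rw [Finset.card_univ_diff]; simp
  calc 2 * ((N - 1) * w) ≤ 2 * ∑ c ∈ Ks, hammingNorm c := Nat.mul_le_mul_left 2 hlow
    _ = 2 * ∑ i ∈ univ \ S, (Ks.filter (fun c => c i ≠ 0)).card := by rw [hdc, hsum]
    _ ≤ (n - S.card) * N := hup

theorem arith1 (a : ℕ) (ha : 2 ≤ a)
    (h : 2 * ((2 * a - 1) * a) ≤ (2 * a - 1 - 1) * (2 * a)) : False := by
  obtain ⟨c, rfl⟩ : ∃ c, a = c + 2 := ⟨a - 2, by omega⟩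
  have e1 : 2 * (c + 2) - 1 = 2 * c + 3 := by omega
  have e2 : 2 * c + 3 - 1 = 2 * c + 2 := by omega
  rw [e1, e2] at h
  nlinarith [h]

theorem arith2 (a N : ℕ) (ha : 2 ≤ a) (hN : a ≤ N)
    (h : 2 * ((N - 1) * a) ≤ (2 * a - 1 - 2) * N) : False := by
  obtain ⟨c, rfl⟩ : ∃ c, a = c + 2 := ⟨a - 2, by omega⟩
  obtain ⟨d, rfl⟩ : ∃ d, N = c + 2 + d := ⟨N - (c + 2), by omega⟩
  have e1 : c + 2 + d - 1 = c + d + 1 := by omega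
  have e2 : 2 * (c + 2) - 1 - 2 = 2 * c + 1 := by omega
  rw [e1, e2] at h
  nlinarith [h]

theorem dual_of_simplex_has_min_distance_three
    (m : ℕ) (hm : 2 ≤ m)
    (C : Submodule (ZMod 2) (Fin (2 ^ m - 1) → ZMod 2))
    (hdim : Module.finrank (ZMod 2) C = m)
    (hmin : ∀ x ∈ C, x ≠ 0 → 2 ^ (m - 1) ≤ hammingNorm x) :
    ∀ x : Fin (2 ^ m - 1) → ZMod 2,
      (∀ c ∈ C, ∑ i, x i * c i = 0) → x ≠ 0 → 3 ≤ hammingNorm x := by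
  classical
  intro x hdual hx
  by_contra hlt
  push_neg at hlt
  -- support of x
  set supp := univ.filter (fun i : Fin (2 ^ m - 1) => x i ≠ 0) with hsuppdef
  have hsupp_card : supp.card = hammingNorm x := rfl
  have hpos : 1 ≤ hammingNorm x := by
    rcases Nat.eq_zero_or_pos (hammingNorm x) with h | h
    · exact absurd (hammingNorm_eq_zero.mp h) hx
    · exact h
  -- the dual condition in terms of the support
  have hsupp_sum : ∀ c ∈ C, ∑ i ∈ supp, c i = 0 := by
    intro c hc
    have h1 : ∑ i, x i * c i = ∑ i ∈ supp, x i * c i := by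
      rw [Finset.sum_filter]
      apply Finset.sum_congr rfl
      intro i _
      by_cases h : x i ≠ 0
      · simp [h]
      · push_neg at h; simp [h]
    have h2 : ∑ i ∈ supp, x i * c i = ∑ i ∈ supp, c i := by
      apply Finset.sum_congr rfl
      intro i hi
      simp only [hsuppdef, mem_filter, mem_univ, true_and] at hi
      rw [zmod2_eq_one hi, one_mul]
    have := hdual c hc
    rw [h1, h2] at this
    exact this
  -- cardinality of C
  have hcardC : (univ.filter (· ∈ C)).card = 2 ^ m := by
    have h1 : Fintype.card C = Fintype.card (ZMod 2) ^ Module.finrank (ZMod 2) C :=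
      Module.card_eq_pow_finrank
    rw [ZMod.card, hdim] at h1
    rw [← Fintype.card_subtype]
    exact h1
  have ha2 : 2 ≤ 2 ^ (m - 1) := by
    calc 2 = 2 ^ 1 := rfl
    _ ≤ 2 ^ (m - 1) := Nat.pow_le_pow_right (by norm_num) (by omega)
  have hmm : 2 ^ m = 2 * 2 ^ (m - 1) := by
    conv_lhs => rw [show m = (m - 1) + 1 by omega]
    rw [pow_succ]; ring
  have hcases : hammingNorm x = 1 ∨ hammingNorm x = 2 := by omega
  rcases hcases with h | h
  · -- weight 1
    rw [← hsupp_card] at h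
    obtain ⟨i, hi⟩ := Finset.card_eq_one.mp h
    have hS : ∀ c ∈ C, ∀ k ∈ ({i} : Finset (Fin (2 ^ m - 1))), c k = 0 := by
      intro c hc k hk
      rw [Finset.mem_singleton] at hk
      subst hk
      have := hsupp_sum c hc
      rw [hi, Finset.sum_singleton] at this
      exact this
    have key := counting C {i} (2 ^ (m - 1)) hS hmin
    rw [hcardC, Finset.card_singleton] at key
    rw [hmm] at key
    exact arith1 (2 ^ (m - 1)) ha2 key
  · -- weight 2
    rw [← hsupp_card] at h
    obtain ⟨i, j, hij, hij2⟩ := Finset.card_eq_two.mp h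
    -- each codeword satisfies c i + c j = 0
    have hpair : ∀ c ∈ C, c i + c j = 0 := by
      intro c hc
      have := hsupp_sum c hc
      rw [hij2, Finset.sum_pair hij] at this
      exact this
    set K : Submodule (ZMod 2) (Fin (2 ^ m - 1) → ZMod 2) :=
      C ⊓ LinearMap.ker (LinearMap.proj i) with hKdef
    have hmemK : ∀ c, c ∈ K ↔ c ∈ C ∧ c i = 0 := by
      intro c
      simp [hKdef, Submodule.mem_inf, LinearMap.mem_ker]
    have hS : ∀ c ∈ K, ∀ k ∈ ({i, j} : Finset (Fin (2 ^ m - 1))), c k = 0 := by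
      intro c hc k hk
      obtain ⟨hcC, hci⟩ := (hmemK c).mp hc
      rcases Finset.mem_insert.mp hk with rfl | hk
      · exact hci
      · rw [Finset.mem_singleton] at hk; subst hk
        exact zmod2_add_eq_zero (hpair c hcC) hci
    have hw : ∀ c ∈ K, c ≠ 0 → 2 ^ (m - 1) ≤ hammingNorm c := by
      intro c hc hc0
      exact hmin c ((hmemK c).mp hc).1 hc0
    -- lower bound on |K|
    have hNbound : 2 ^ (m - 1) ≤ (univ.filter (· ∈ K)).card := by
      have hAB := colA C i
      have hsplit : (univ.filter (fun c : Fin (2 ^ m - 1) → ZMod 2 => c ∈ C ∧ c i ≠ 0)).card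
          + (univ.filter (fun c : Fin (2 ^ m - 1) → ZMod 2 => c ∈ C ∧ c i = 0)).card
          = (univ.filter (· ∈ C)).card := by
        rw [← Finset.filter_filter, ← Finset.filter_filter (fun c : Fin (2 ^ m - 1) → ZMod 2 => c ∈ C)]
        have := Finset.card_filter_add_card_filter_not
          (s := univ.filter (fun c : Fin (2 ^ m - 1) → ZMod 2 => c ∈ C))
          (p := fun c => c i ≠ 0)
        simp only [not_not] at this
        exact this
      have heqK : univ.filter (fun c : Fin (2 ^ m - 1) → ZMod 2 => c ∈ K)
          = univ.filter (fun c : Fin (2 ^ m - 1) → ZMod 2 => c ∈ C ∧ c i = 0) := by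
        apply Finset.filter_congr
        intro c _
        simp [hmemK c]
      rw [heqK]
      set B := (univ.filter (fun c : Fin (2 ^ m - 1) → ZMod 2 => c ∈ C ∧ c i = 0)).card
      set A := (univ.filter (fun c : Fin (2 ^ m - 1) → ZMod 2 => c ∈ C ∧ c i ≠ 0)).card
      rw [hcardC] at hsplit
      have h2B : 2 * 2 ^ (m - 1) ≤ 2 * B := by
        rw [← hmm, ← hsplit]
        calc A + B ≤ B + B := Nat.add_le_add_right hAB B
          _ = 2 * B := (two_mul B).symm
      exact Nat.le_of_mul_le_mul_left h2B (by norm_num)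
    have key := counting K {i, j} (2 ^ (m - 1)) hS hw
    have hcard2 : ({i, j} : Finset (Fin (2 ^ m - 1))).card = 2 := Finset.card_pair hij
    rw [hcard2] at key
    have e : 2 ^ m - 1 - 2 = 2 * 2 ^ (m - 1) - 1 - 2 := by rw [hmm]
    rw [e] at key
    exact arith2 (2 ^ (m - 1)) ((univ.filter (· ∈ K)).card) ha2 hNbound key
end

section
/- Let m ≥ 1 and i ≥ 1 be integers with gcd(m, 2i) = gcd(m, i). Then gcd(2^m − 1, 2^i + 1) = 1. -/
theorem gcd_pow_two_sub_one_pow_two_add_one_eq_one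
    (m i : ℕ) (hm : 1 ≤ m) (hi : 1 ≤ i)
    (h : Nat.gcd m (2 * i) = Nat.gcd m i) :
    Nat.gcd (2 ^ m - 1) (2 ^ i + 1) = 1 := by
  by_contra hne
  obtain ⟨p, hp, hpd⟩ := Nat.exists_prime_and_dvd hne
  have h1 : p ∣ 2 ^ m - 1 := hpd.trans (Nat.gcd_dvd_left _ _)
  have h2 : p ∣ 2 ^ i + 1 := hpd.trans (Nat.gcd_dvd_right _ _)
  have hp2 : p ≠ 2 := by
    rintro rfl
    have : (2 : ℕ) ∣ 2 ^ i := dvd_pow_self 2 (by omega)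
    omega
  haveI := Fact.mk hp
  have hone : 1 ≤ 2 ^ m := Nat.one_le_two_pow
  have e1 : (2 : ZMod p) ^ m = 1 := by
    have : ((2 ^ m - 1 : ℕ) : ZMod p) = 0 := (ZMod.natCast_eq_zero_iff _ _).2 h1
    rw [Nat.cast_sub hone] at this
    push_cast at this
    linear_combination this
  have e2 : (2 : ZMod p) ^ i = -1 := by
    have : ((2 ^ i + 1 : ℕ) : ZMod p) = 0 := (ZMod.natCast_eq_zero_iff _ _).2 h2
    push_cast at this
    linear_combination this
  have hk1 : orderOf (2 : ZMod p) ∣ m := orderOf_dvd_of_pow_eq_one e1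
  have hk2 : orderOf (2 : ZMod p) ∣ 2 * i := by
    apply orderOf_dvd_of_pow_eq_one
    rw [mul_comm, pow_mul, e2]
    ring
  have hki : orderOf (2 : ZMod p) ∣ i :=
    (h ▸ Nat.dvd_gcd hk1 hk2).trans (Nat.gcd_dvd_right _ _)
  have heq : (2 : ZMod p) ^ i = 1 := orderOf_dvd_iff_pow_eq_one.1 hki
  rw [e2] at heq
  haveI : Fact (2 < p) := ⟨lt_of_le_of_ne hp.two_le (Ne.symm hp2)⟩
  exact CharP.neg_one_ne_one (ZMod p) p heq
end

section
/- Let m ≥ 1 and i ≥ 1 be integers with gcd(m, 2i) = 2·gcd(m, i). Then gcd(2^m − 1, 2^i + 1) = 2^(gcd(m, i)) + 1. -/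
lemma aux_dvd_pow_gcd_sub_one {g m n : ℕ} (hg : g ≠ 0)
    (h1 : g ∣ 2 ^ m - 1) (h2 : g ∣ 2 ^ n - 1) : g ∣ 2 ^ Nat.gcd m n - 1 := by
  haveI : NeZero g := ⟨hg⟩
  have e1 : (2 : ZMod g) ^ m = 1 := by
    have := (ZMod.natCast_eq_zero_iff _ _).mpr h1
    rw [Nat.cast_sub Nat.one_le_two_pow] at this
    push_cast at this
    exact sub_eq_zero.mp this
  have e2 : (2 : ZMod g) ^ n = 1 := by
    have := (ZMod.natCast_eq_zero_iff _ _).mpr h2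
    rw [Nat.cast_sub Nat.one_le_two_pow] at this
    push_cast at this
    exact sub_eq_zero.mp this
  have e3 := (pow_gcd_eq_one (a := (2 : ZMod g))).mpr ⟨e1, e2⟩
  rw [← ZMod.natCast_eq_zero_iff]
  rw [Nat.cast_sub Nat.one_le_two_pow]
  push_cast
  rw [e3, sub_self]

theorem gcd_pow_two_sub_one_pow_two_add_one_eq
    (m i : ℕ) (hm : 1 ≤ m) (hi : 1 ≤ i)
    (h : Nat.gcd m (2 * i) = 2 * Nat.gcd m i) :
    Nat.gcd (2 ^ m - 1) (2 ^ i + 1) = 2 ^ Nat.gcd m i + 1 := by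
  set d := Nat.gcd m i with hd
  have hdpos : 1 ≤ d := Nat.gcd_pos_of_pos_left _ hm
  have hdm : d ∣ m := Nat.gcd_dvd_left m i
  have hdi : d ∣ i := Nat.gcd_dvd_right m i
  have h2dm : 2 * d ∣ m := h ▸ Nat.gcd_dvd_left m (2 * i)
  have h2dni : ¬ (2 * d ∣ i) := by
    intro hc
    have : 2 * d ∣ d := Nat.dvd_gcd h2dm hc
    have := Nat.le_of_dvd hdpos this
    omega
  -- k := i / d is odd
  obtain ⟨k, hk⟩ := hdi
  have hkodd : Odd k := by
    rcases Nat.even_or_odd k with he | ho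
    · obtain ⟨k', rfl⟩ := he
      exact absurd ⟨k', by rw [hk]; ring⟩ h2dni
    · exact ho
  -- 2^d + 1 ∣ 2^i + 1
  have hA : 2 ^ d + 1 ∣ 2 ^ i + 1 := by
    have := Odd.nat_add_dvd_pow_add_pow (2 ^ d) 1 hkodd
    simpa [hk, pow_mul] using this
  -- 2^d + 1 ∣ 2^m - 1
  have hfact : (2 ^ d - 1) * (2 ^ d + 1) = 2 ^ (2 * d) - 1 := by
    have h1 : 1 ≤ 2 ^ d := Nat.one_le_two_pow
    have : 2 ^ (2 * d) = 2 ^ d * 2 ^ d := by rw [two_mul, pow_add]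
    have h2 : 1 ≤ 2 ^ d * 2 ^ d := Nat.one_le_iff_ne_zero.mpr (by positivity)
    rw [this]
    zify [h1, h2]
    ring
  have hB : 2 ^ d + 1 ∣ 2 ^ m - 1 := by
    have h1 : 2 ^ d + 1 ∣ 2 ^ (2 * d) - 1 := hfact ▸ dvd_mul_left _ _
    have h2 : 2 ^ (2 * d) - 1 ∣ 2 ^ m - 1 := by
      obtain ⟨c, hc⟩ := h2dm
      have := Nat.sub_dvd_pow_sub_pow (2 ^ (2 * d)) 1 c
      simpa [hc, pow_mul] using this
    exact h1.trans h2
  set g := Nat.gcd (2 ^ m - 1) (2 ^ i + 1) with hg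
  have hgpos : g ≠ 0 := by
    have : 0 < 2 ^ i + 1 := by positivity
    exact Nat.ne_of_gt (Nat.gcd_pos_of_pos_right _ this)
  -- g ∣ 2^(2d) - 1
  have hgm : g ∣ 2 ^ m - 1 := Nat.gcd_dvd_left _ _
  have hgi : g ∣ 2 ^ i + 1 := Nat.gcd_dvd_right _ _
  have hg2i : g ∣ 2 ^ (2 * i) - 1 := by
    have : 2 ^ i + 1 ∣ 2 ^ (2 * i) - 1 := by
      have h1 : 1 ≤ 2 ^ i := Nat.one_le_two_pow
      have : 2 ^ (2 * i) - 1 = (2 ^ i - 1) * (2 ^ i + 1) := by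
        have : 2 ^ (2 * i) = 2 ^ i * 2 ^ i := by rw [two_mul, pow_add]
        have h2 : 1 ≤ 2 ^ i * 2 ^ i := Nat.one_le_iff_ne_zero.mpr (by positivity)
        rw [this]
        zify [h1, h2]
        ring
      rw [this]
      exact dvd_mul_left _ _
    exact hgi.trans this
  have hgd : g ∣ 2 ^ (2 * d) - 1 := by
    have := aux_dvd_pow_gcd_sub_one hgpos hgm hg2i
    rwa [h] at this
  -- g is coprime to 2^d - 1
  have hgodd : Odd g := by
    rcases Nat.even_or_odd g with he | ho
    · exfalso
      have : 2 ∣ 2 ^ i + 1 := (even_iff_two_dvd.mp he).trans hgi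
      have h1 : 2 ∣ 2 ^ i := dvd_pow_self 2 (by omega)
      omega
    · exact ho
  have hcop : Nat.Coprime g (2 ^ d - 1) := by
    have hdvd2 : Nat.gcd g (2 ^ d - 1) ∣ 2 := by
      have h1 : Nat.gcd g (2 ^ d - 1) ∣ 2 ^ i + 1 :=
        (Nat.gcd_dvd_left _ _).trans hgi
      have h2 : Nat.gcd g (2 ^ d - 1) ∣ 2 ^ i - 1 := by
        refine (Nat.gcd_dvd_right _ _).trans ?_
        have := Nat.sub_dvd_pow_sub_pow (2 ^ d) 1 k
        simpa [hk, pow_mul] using this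
      have := Nat.dvd_sub h1 h2
      have h3 : 1 ≤ 2 ^ i := Nat.one_le_two_pow
      have h4 : 2 ^ i + 1 - (2 ^ i - 1) = 2 := by omega
      rwa [h4] at this
    rcases (Nat.dvd_prime Nat.prime_two).mp hdvd2 with h1 | h2
    · exact h1
    · exfalso
      have : 2 ∣ g := h2 ▸ Nat.gcd_dvd_left _ _
      rcases hgodd with ⟨t, ht⟩
      omega
  -- g ∣ 2^d + 1
  have hgdvd : g ∣ 2 ^ d + 1 := by
    have : g ∣ (2 ^ d - 1) * (2 ^ d + 1) := hfact ▸ hgd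
    exact (Nat.Coprime.dvd_of_dvd_mul_left hcop this)
  have hdvdg : 2 ^ d + 1 ∣ g := Nat.dvd_gcd hB hA
  exact Nat.dvd_antisymm hgdvd hdvdg
end

section
/- Let m = 2t + 1 be odd with t ≥ 1, let n = 2^m − 1, and let 1 ≤ i ≤ t. Then the cyclotomic coset of l_i = 1 + 2^i modulo n, i.e. the set { (1 + 2^i) · 2^j mod n : j ∈ ℕ }, has cardinality exactly m. -/
private lemma two_pow_mod_eq (a : ℕ) (ha : 0 < a) (b : ℕ) :
    (2 ^ b - 1) % (2 ^ a - 1) = 2 ^ (b % a) - 1 := by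
  have h1 : (2 : ℕ) ^ a ≡ 1 [MOD 2 ^ a - 1] :=
    ((Nat.modEq_iff_dvd' Nat.one_le_two_pow).mpr dvd_rfl).symm
  have h2 : (2 : ℕ) ^ b ≡ 2 ^ (b % a) [MOD 2 ^ a - 1] := by
    conv_lhs => rw [← Nat.div_add_mod b a]
    rw [pow_add, pow_mul]
    calc ((2:ℕ)^a)^(b/a) * 2^(b % a) ≡ 1^(b/a) * 2^(b%a) [MOD 2^a - 1] :=
          (h1.pow _).mul_right _
      _ = 2^(b%a) := by rw [one_pow, one_mul]
  have h3 : (2:ℕ)^b - 1 ≡ 2^(b%a) - 1 [MOD 2^a - 1] := by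
    have hb : 1 ≤ (2:ℕ)^b := Nat.one_le_two_pow
    have hb' : 1 ≤ (2:ℕ)^(b % a) := Nat.one_le_two_pow
    have := h2
    apply Nat.ModEq.add_right_cancel' 1
    simpa [Nat.sub_add_cancel hb, Nat.sub_add_cancel hb'] using h2
  have hlt : (2:ℕ)^(b % a) - 1 < 2^a - 1 := by
    have : (2:ℕ)^(b % a) < 2^a := Nat.pow_lt_pow_right one_lt_two (Nat.mod_lt b ha)
    have hb' : 1 ≤ (2:ℕ)^(b % a) := Nat.one_le_two_pow
    omega
  calc (2^b - 1) % (2^a - 1) = (2^(b%a) - 1) % (2^a - 1) := h3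
    _ = 2^(b%a) - 1 := Nat.mod_eq_of_lt hlt

private lemma gcd_two_pow_sub_one : ∀ a b : ℕ,
    Nat.gcd (2 ^ a - 1) (2 ^ b - 1) = 2 ^ Nat.gcd a b - 1 := by
  intro a
  induction a using Nat.strong_induction_on with
  | _ a ih =>
    intro b
    rcases Nat.eq_zero_or_pos a with rfl | ha
    · simp
    · rw [Nat.gcd_rec (2^a - 1) (2^b - 1), two_pow_mod_eq a ha b,
        ih (b % a) (Nat.mod_lt b ha) a, ← Nat.gcd_rec]

private lemma coprime_aux (i m : ℕ) (hi : 1 ≤ i) (hm : Odd m) (hm1 : 1 ≤ m) :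
    Nat.Coprime (1 + 2 ^ i) (2 ^ m - 1) := by
  set d := Nat.gcd (1 + 2^i) (2^m - 1) with hd
  have hd1 : d ∣ 1 + 2^i := Nat.gcd_dvd_left _ _
  have hd2 : d ∣ 2^m - 1 := Nat.gcd_dvd_right _ _
  have hdvd2i : d ∣ 2^(2*i) - 1 := by
    refine hd1.trans ⟨2^i - 1, ?_⟩
    have h1 : 1 ≤ (2:ℕ)^i := Nat.one_le_two_pow
    have h2 : 1 ≤ (2:ℕ)^(2*i) := Nat.one_le_two_pow
    have h3 : (2:ℕ)^(2*i) = 2^i * 2^i := by rw [two_mul, pow_add]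
    have h4 : 1 ≤ (2:ℕ)^i * 2^i := by nlinarith
    rw [h3]
    zify [h1, h4]
    ring
  have hdg : d ∣ 2^(Nat.gcd (2*i) m) - 1 := by
    rw [← gcd_two_pow_sub_one]
    exact Nat.dvd_gcd hdvd2i hd2
  have hgcd : Nat.gcd (2*i) m = Nat.gcd i m := by
    have h2 : Nat.Coprime 2 m := Nat.coprime_two_left.mpr hm
    exact Nat.Coprime.gcd_mul_left_cancel i h2
  have hdvd : d ∣ 2^i - 1 := by
    rw [hgcd] at hdg
    refine hdg.trans ?_
    obtain ⟨c, hc⟩ := Nat.gcd_dvd_left i m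
    have key : (2:ℕ)^(Nat.gcd i m) - 1 ∣ 2^(Nat.gcd i m * c) - 1 := by
      rw [pow_mul]
      simpa using Nat.sub_dvd_pow_sub_pow ((2:ℕ)^(Nat.gcd i m)) 1 c
    rwa [← hc] at key
  have hdtwo : d ∣ 2 := by
    have h1 : 1 ≤ (2:ℕ)^i := Nat.one_le_two_pow
    have := Nat.dvd_sub hd1 hdvd
    simpa [Nat.sub_sub_self h1, show 1 + 2^i - (2^i - 1) = 2 by omega] using this
  have hoddn : Odd (2^m - 1) := by
    refine Nat.Even.sub_odd Nat.one_le_two_pow ?_ odd_one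
    exact (Nat.even_pow).mpr ⟨even_two, by omega⟩
  have hodd : Odd d := hoddn.of_dvd_nat hd2
  have hle : d ≤ 2 := Nat.le_of_dvd (by norm_num) hdtwo
  have hmod2 : d % 2 = 1 := Nat.odd_iff.mp hodd
  omega

theorem cyclotomic_coset_card_odd
    (t : ℕ) (ht : 1 ≤ t) (i : ℕ) (hi1 : 1 ≤ i) (hit : i ≤ t) :
    {x : ℕ | ∃ j : ℕ, x = (1 + 2 ^ i) * 2 ^ j % (2 ^ (2 * t + 1) - 1)}.ncard
      = 2 * t + 1 := by
  set m := 2 * t + 1 with hm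
  set n := 2 ^ m - 1 with hn
  set l := 1 + 2 ^ i with hl
  have hmpos : 0 < m := by omega
  have h2m : (2:ℕ)^m ≡ 1 [MOD n] := by
    unfold Nat.ModEq
    have h1 : 1 ≤ (2:ℕ)^m := Nat.one_le_two_pow
    have : (2:ℕ)^m = n + 1 := by omega
    rw [this, Nat.add_mod_left]
  have hper : ∀ j : ℕ, l * 2 ^ j % n = l * 2 ^ (j % m) % n := by
    intro j
    have : (2:ℕ)^j ≡ 2^(j % m) [MOD n] := by
      conv_lhs => rw [← Nat.div_add_mod j m]
      rw [pow_add, pow_mul]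
      calc ((2:ℕ)^m)^(j/m) * 2^(j % m) ≡ 1^(j/m) * 2^(j%m) [MOD n] :=
            (h2m.pow _).mul_right _
        _ = 2^(j%m) := by rw [one_pow, one_mul]
    exact (this.mul_left l)
  have hset : {x : ℕ | ∃ j : ℕ, x = l * 2 ^ j % n}
      = ↑((Finset.range m).image (fun j => l * 2 ^ j % n)) := by
    ext x
    simp only [Set.mem_setOf_eq, Finset.coe_image, Set.mem_image, Finset.mem_coe,
      Finset.mem_range]
    constructor
    · rintro ⟨j, rfl⟩
      exact ⟨j % m, Nat.mod_lt j hmpos, (hper j).symm⟩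
    · rintro ⟨j, _, rfl⟩
      exact ⟨j, rfl⟩
  rw [hset, Set.ncard_coe_finset]
  rw [Finset.card_image_of_injOn, Finset.card_range]
  intro j hj k hk hjk
  simp only [Finset.mem_coe, Finset.mem_range] at hj hk
  have hco : Nat.Coprime l n := coprime_aux i m hi1 ⟨t, by omega⟩ (by omega)
  have hmod : l * 2^j ≡ l * 2^k [MOD n] := hjk
  have h2 : (2:ℕ)^j ≡ 2^k [MOD n] := by
    apply Nat.ModEq.cancel_left_of_coprime _ hmod
    rw [Nat.gcd_comm]; exact hco
  have hlt : ∀ j' : ℕ, j' < m → (2:ℕ)^j' < n := by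
    intro j' hj'
    have h1 : (2:ℕ)^j' ≤ 2^(m-1) := Nat.pow_le_pow_right (by norm_num) (by omega)
    have h2' : (2:ℕ)^m = 2 * 2^(m-1) := by
      have hmeq : m = (m-1)+1 := by omega
      conv_lhs => rw [hmeq]
      rw [pow_succ']
    have h3 : 2 ≤ (2:ℕ)^(m-1) := by
      calc (2:ℕ) = 2^1 := rfl
        _ ≤ 2^(m-1) := Nat.pow_le_pow_right (by norm_num) (by omega)
    omega
  have heq : (2:ℕ)^j = 2^k := by
    have := h2
    unfold Nat.ModEq at this
    rwa [Nat.mod_eq_of_lt (hlt j hj), Nat.mod_eq_of_lt (hlt k hk)] at this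
  exact Nat.pow_right_injective (le_refl 2) heq
end

section
/- Let m = 2t + 2 be even with t ≥ 0 and let n = 2^m − 1. Then: (a) for every i with 1 ≤ i ≤ t, the cyclotomic coset of 1 + 2^i modulo n, i.e. the set { (1 + 2^i) · 2^j mod n : j ∈ ℕ }, has cardinality exactly m; and (b) the cyclotomic coset of 1 + 2^(t+1) modulo n has cardinality exactly m/2 = t + 1. -/
private lemma log_sum {a b : ℕ} (h : a < b) : Nat.log 2 (2 ^ a + 2 ^ b) = b := by
  apply Nat.log_eq_of_pow_le_of_lt_pow
  · exact Nat.le_add_left _ _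
  · have h1 : (2:ℕ) ^ a < 2 ^ b := Nat.pow_lt_pow_right one_lt_two h
    have h2 : (2:ℕ) ^ (b+1) = 2 ^ b + 2 ^ b := by ring
    omega

private lemma pair_o {a b c d : ℕ} (hab : a < b) (hcd : c < d)
    (h : 2 ^ a + 2 ^ b = 2 ^ c + 2 ^ d) : a = c ∧ b = d := by
  have hbd : b = d := by
    have h1 := log_sum hab
    have h2 := log_sum hcd
    rw [h] at h1; omega
  subst hbd
  have h2 : (2:ℕ) ^ a = 2 ^ c := by omega
  exact ⟨Nat.pow_right_injective (le_refl 2) h2, rfl⟩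

private lemma pair_u {a b c d : ℕ} (hab : a ≠ b) (hcd : c ≠ d)
    (h : 2 ^ a + 2 ^ b = 2 ^ c + 2 ^ d) :
    (a = c ∧ b = d) ∨ (a = d ∧ b = c) := by
  rcases Nat.lt_or_ge a b with h1 | h1 <;> rcases Nat.lt_or_ge c d with h2 | h2
  · exact Or.inl (pair_o h1 h2 h)
  · have := pair_o h1 (show d < c by omega) (by rw [h, Nat.add_comm])
    exact Or.inr this
  · have := pair_o (show b < a by omega) h2 (by rw [← h, Nat.add_comm])
    exact Or.inr ⟨this.2, this.1⟩
  · have := pair_o (show b < a by omega) (show d < c by omega)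
      (by rw [Nat.add_comm, h, Nat.add_comm])
    exact Or.inl ⟨this.2, this.1⟩

private lemma mod_small {a m : ℕ} (hm : 0 < m) (h : a < 2 * m) :
    a % m = a ∨ a % m + m = a := by
  rcases Nat.lt_or_ge a m with h' | h'
  · exact Or.inl (Nat.mod_eq_of_lt h')
  · right; rw [Nat.mod_eq_sub_mod h', Nat.mod_eq_of_lt (by omega)]; omega

private lemma sum_lt {m a b : ℕ} (hm : 3 ≤ m) (ha : a < m) (hb : b < m) (hab : a ≠ b) :
    2 ^ a + 2 ^ b < 2 ^ m - 1 := by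
  have e1 : (4:ℕ) * 2 ^ (m - 2) = 2 ^ m := by
    have h4 : (4:ℕ) * 2 ^ (m - 2) = 2 ^ (m - 2 + 2) := by ring
    rw [h4]; congr 1; omega
  have e2 : (2:ℕ) * 2 ^ (m - 2) = 2 ^ (m - 1) := by
    have h2 : (2:ℕ) * 2 ^ (m - 2) = 2 ^ (m - 2 + 1) := by ring
    rw [h2]; congr 1; omega
  have e3 : (2:ℕ) ≤ 2 ^ (m - 2) := by
    calc (2:ℕ) = 2 ^ 1 := rfl
    _ ≤ 2 ^ (m - 2) := Nat.pow_le_pow_right (by norm_num) (by omega)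
  rcases Nat.lt_or_ge a b with h | h
  · have h1 : (2:ℕ) ^ a ≤ 2 ^ (m - 2) := Nat.pow_le_pow_right (by norm_num) (by omega)
    have h2 : (2:ℕ) ^ b ≤ 2 ^ (m - 1) := Nat.pow_le_pow_right (by norm_num) (by omega)
    omega
  · have hba : b < a := by omega
    have h1 : (2:ℕ) ^ b ≤ 2 ^ (m - 2) := Nat.pow_le_pow_right (by norm_num) (by omega)
    have h2 : (2:ℕ) ^ a ≤ 2 ^ (m - 1) := Nat.pow_le_pow_right (by norm_num) (by omega)
    omega

private lemma key (m i j : ℕ) (hm : 3 ≤ m) (hi : 0 < i % m) :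
    (1 + 2 ^ i) * 2 ^ j % (2 ^ m - 1) = 2 ^ (j % m) + 2 ^ ((i + j) % m) := by
  have hpos : (1:ℕ) ≤ 2 ^ m := Nat.one_le_two_pow
  have hmod : ∀ k : ℕ, (2:ℕ) ^ k ≡ 2 ^ (k % m) [MOD 2 ^ m - 1] := by
    intro k
    have h1 : (2:ℕ) ^ m ≡ 1 [MOD 2 ^ m - 1] :=
      ((Nat.modEq_iff_dvd' hpos).2 dvd_rfl).symm
    calc (2:ℕ) ^ k = ((2:ℕ) ^ m) ^ (k / m) * 2 ^ (k % m) := by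
          rw [← pow_mul, ← pow_add, Nat.div_add_mod]
    _ ≡ 1 ^ (k / m) * 2 ^ (k % m) [MOD 2 ^ m - 1] :=
          Nat.ModEq.mul_right _ (h1.pow _)
    _ = 2 ^ (k % m) := by rw [one_pow, one_mul]
  have hcong : (1 + 2 ^ i) * 2 ^ j ≡ 2 ^ (j % m) + 2 ^ ((i + j) % m) [MOD 2 ^ m - 1] := by
    have he : (1 + 2 ^ i) * 2 ^ j = 2 ^ j + 2 ^ (i + j) := by
      rw [add_mul, one_mul, ← pow_add]
    rw [he]
    exact (hmod j).add (hmod (i + j))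
  have hne : j % m ≠ (i + j) % m := by
    intro h
    have hu : i % m < m := Nat.mod_lt _ (by omega)
    have hv : j % m < m := Nat.mod_lt _ (by omega)
    have h2 : (i + j) % m = (i % m + j % m) % m := by rw [Nat.add_mod]
    have h3 := mod_small (a := i % m + j % m) (m := m) (by omega) (by omega)
    omega
  have hlt : 2 ^ (j % m) + 2 ^ ((i + j) % m) < 2 ^ m - 1 :=
    sum_lt hm (Nat.mod_lt _ (by omega)) (Nat.mod_lt _ (by omega)) hne
  calc (1 + 2 ^ i) * 2 ^ j % (2 ^ m - 1)
      = (2 ^ (j % m) + 2 ^ ((i + j) % m)) % (2 ^ m - 1) := hcong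
  _ = 2 ^ (j % m) + 2 ^ ((i + j) % m) := Nat.mod_eq_of_lt hlt

private lemma per_mod (f : ℕ → ℕ) (p : ℕ) (hp : 0 < p)
    (hf : ∀ j, f (j + p) = f j) : ∀ j, f j = f (j % p) := by
  intro j
  induction j using Nat.strong_induction_on with
  | _ j ih =>
    rcases Nat.lt_or_ge j p with h | h
    · rw [Nat.mod_eq_of_lt h]
    · calc f j = f (j - p + p) := by rw [Nat.sub_add_cancel h]
      _ = f (j - p) := hf _
      _ = f ((j - p) % p) := ih _ (by omega)
      _ = f (j % p) := by rw [← Nat.mod_eq_sub_mod h]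

private lemma coset_eq (m i p : ℕ) (hm : 3 ≤ m) (hi : 0 < i % m) (hp : 0 < p)
    (hper : ∀ j : ℕ, (2 ^ ((j + p) % m) + 2 ^ ((i + (j + p)) % m) : ℕ)
      = 2 ^ (j % m) + 2 ^ ((i + j) % m)) :
    {x : ℕ | ∃ j : ℕ, x = (1 + 2 ^ i) * 2 ^ j % (2 ^ m - 1)}
      = ↑((Finset.range p).image (fun j => (2 ^ (j % m) + 2 ^ ((i + j) % m) : ℕ))) := by
  ext x
  simp only [Set.mem_setOf_eq, Finset.coe_image, Set.mem_image, Finset.mem_coe,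
    Finset.mem_range]
  constructor
  · rintro ⟨j, rfl⟩
    refine ⟨j % p, Nat.mod_lt _ hp, ?_⟩
    rw [key m i j hm hi]
    exact (per_mod (fun j => (2 ^ (j % m) + 2 ^ ((i + j) % m) : ℕ)) p hp hper j).symm
  · rintro ⟨j, _, rfl⟩
    exact ⟨j, (key m i j hm hi).symm⟩

theorem cyclotomic_coset_card_even
    (t : ℕ) :
    (∀ i : ℕ, 1 ≤ i → i ≤ t →
      {x : ℕ | ∃ j : ℕ, x = (1 + 2 ^ i) * 2 ^ j % (2 ^ (2 * t + 2) - 1)}.ncard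
        = 2 * t + 2) ∧
    {x : ℕ | ∃ j : ℕ, x = (1 + 2 ^ (t + 1)) * 2 ^ j % (2 ^ (2 * t + 2) - 1)}.ncard
      = t + 1 := by
  constructor
  · intro i hi1 hi2
    have ht : 1 ≤ t := le_trans hi1 hi2
    have hm3 : 3 ≤ 2 * t + 2 := by omega
    have hi : 0 < i % (2 * t + 2) := by
      rw [Nat.mod_eq_of_lt (by omega)]; omega
    have hper : ∀ j : ℕ,
        (2 ^ ((j + (2 * t + 2)) % (2 * t + 2)) + 2 ^ ((i + (j + (2 * t + 2))) % (2 * t + 2)) : ℕ)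
        = 2 ^ (j % (2 * t + 2)) + 2 ^ ((i + j) % (2 * t + 2)) := by
      intro j
      rw [Nat.add_mod_right, show i + (j + (2 * t + 2)) = (i + j) + (2 * t + 2) by omega,
        Nat.add_mod_right]
    rw [coset_eq (2 * t + 2) i (2 * t + 2) hm3 hi (by omega) hper,
      Set.ncard_coe_finset, Finset.card_image_of_injOn, Finset.card_range]
    intro j hj j' hj' heq
    simp only [Finset.coe_range, Set.mem_Iio] at hj hj'
    simp only at heq
    rw [Nat.mod_eq_of_lt hj, Nat.mod_eq_of_lt hj'] at heq
    have hb := mod_small (a := i + j) (m := 2 * t + 2) (by omega) (by omega)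
    have hb' := mod_small (a := i + j') (m := 2 * t + 2) (by omega) (by omega)
    have hne : j ≠ (i + j) % (2 * t + 2) := by omega
    have hne' : j' ≠ (i + j') % (2 * t + 2) := by omega
    rcases pair_u hne hne' heq with ⟨h1, _⟩ | ⟨h1, h2⟩
    · exact h1
    · omega
  · rcases Nat.eq_zero_or_pos t with rfl | ht
    · have hset : {x : ℕ | ∃ j : ℕ, x = (1 + 2 ^ (0 + 1)) * 2 ^ j % (2 ^ (2 * 0 + 2) - 1)}
          = {0} := by
        ext x
        simp only [Set.mem_setOf_eq, Set.mem_singleton_iff]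
        constructor
        · rintro ⟨j, rfl⟩
          norm_num [Nat.mul_mod_right]
        · rintro rfl
          exact ⟨0, by norm_num⟩
      rw [hset, Set.ncard_singleton]
    · have hm3 : 3 ≤ 2 * t + 2 := by omega
      have hi : 0 < (t + 1) % (2 * t + 2) := by
        rw [Nat.mod_eq_of_lt (by omega)]; omega
      have hper : ∀ j : ℕ,
          (2 ^ ((j + (t + 1)) % (2 * t + 2)) + 2 ^ (((t + 1) + (j + (t + 1))) % (2 * t + 2)) : ℕ)
          = 2 ^ (j % (2 * t + 2)) + 2 ^ (((t + 1) + j) % (2 * t + 2)) := by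
        intro j
        rw [show (t + 1) + (j + (t + 1)) = j + (2 * t + 2) by omega, Nat.add_mod_right,
          show j + (t + 1) = (t + 1) + j by omega]
        exact Nat.add_comm _ _
      rw [coset_eq (2 * t + 2) (t + 1) (t + 1) hm3 hi (by omega) hper,
        Set.ncard_coe_finset, Finset.card_image_of_injOn, Finset.card_range]
      intro j hj j' hj' heq
      simp only [Finset.coe_range, Set.mem_Iio] at hj hj'
      simp only at heq
      rw [Nat.mod_eq_of_lt (show j < 2 * t + 2 by omega),
        Nat.mod_eq_of_lt (show j' < 2 * t + 2 by omega),
        Nat.mod_eq_of_lt (show t + 1 + j < 2 * t + 2 by omega),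
        Nat.mod_eq_of_lt (show t + 1 + j' < 2 * t + 2 by omega)] at heq
      rcases pair_u (show j ≠ t + 1 + j by omega) (show j' ≠ t + 1 + j' by omega) heq with
        ⟨h1, _⟩ | ⟨h1, h2⟩
      · exact h1
      · omega
end

section
/- Let m = 2t + 2 with t ≥ 0, let F = GF(2^m) (the Galois field with 2^m elements), let 1 ≤ d ≤ t + 1, and let γ_d, γ_(d+1), …, γ_(t+1) ∈ F, not all zero. Define L : F → F by L(η) = (∑_{j=d}^{t} γ_j · ((γ_j · η)^(2^j) + (γ_j · η)^(2^(m−j)))) + γ_(t+1) · (γ_(t+1) · η)^(2^(t+1)). Then L is an F₂-linear map, and the set { η ∈ F : L(η) = 0 } has cardinality at most 2^(m − 2d); equivalently, the kernel of L is an F₂-subspace of F of dimension at most m − 2d. -/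
open Polynomial

private lemma key_pow {F : Type*} [Field F] {m d j : ℕ} (hdj : d ≤ j) (hdm : d ≤ m)
    (hfrob : ∀ a : F, a ^ 2 ^ m = a) (c η : F) :
    (c ^ ((1 + 2 ^ j) * 2 ^ (m - d)) * η ^ 2 ^ (j - d)) ^ 2 ^ d = c * (c * η) ^ 2 ^ j := by
  have e1 : (1 + 2 ^ j) * 2 ^ (m - d) * 2 ^ d = (1 + 2 ^ j) * 2 ^ m := by
    rw [mul_assoc, ← pow_add, Nat.sub_add_cancel hdm]
  have e2 : 2 ^ (j - d) * 2 ^ d = 2 ^ j := by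
    rw [← pow_add, Nat.sub_add_cancel hdj]
  rw [mul_pow, ← pow_mul, ← pow_mul, e1, e2, pow_mul, hfrob, pow_add, pow_one, mul_pow,
    mul_assoc]

set_option maxHeartbeats 1000000 in
theorem linearized_polynomial_kernel_bound
    (t : ℕ) (d : ℕ) (hd1 : 1 ≤ d) (hd2 : d ≤ t + 1)
    (γ : ℕ → GaloisField 2 (2 * t + 2))
    (hγ : ∃ j : ℕ, d ≤ j ∧ j ≤ t + 1 ∧ γ j ≠ 0) :
    IsLinearMap (ZMod 2)
      (fun η : GaloisField 2 (2 * t + 2) =>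
        (∑ j ∈ Finset.Icc d t,
          γ j * ((γ j * η) ^ 2 ^ j + (γ j * η) ^ 2 ^ (2 * t + 2 - j))) +
        γ (t + 1) * (γ (t + 1) * η) ^ 2 ^ (t + 1)) ∧
    {η : GaloisField 2 (2 * t + 2) |
      (∑ j ∈ Finset.Icc d t,
        γ j * ((γ j * η) ^ 2 ^ j + (γ j * η) ^ 2 ^ (2 * t + 2 - j))) +
      γ (t + 1) * (γ (t + 1) * η) ^ 2 ^ (t + 1) = 0}.ncard
      ≤ 2 ^ (2 * t + 2 - 2 * d) := by
  refine ⟨⟨fun x y => ?_, fun c x => ?_⟩, ?_⟩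
  · simp only [mul_add, add_pow_char_pow, Finset.sum_add_distrib]
    ring
  · have hc : c = 0 ∨ c = 1 := by fin_cases c <;> [exact Or.inl rfl; exact Or.inr rfl]
    rcases hc with rfl | rfl
    · rw [zero_smul, zero_smul]
      simp
    · rw [one_smul, one_smul]
  ·
    classical
    have hdm : d ≤ (2 * t + 2) := by omega
    have hfintype : Fintype (GaloisField 2 (2 * t + 2)) := Fintype.ofFinite _
    have hcard : Nat.card (GaloisField 2 (2 * t + 2)) = 2 ^ (2 * t + 2) := GaloisField.card 2 (2 * t + 2) (by omega)
    have hfrob : ∀ a : GaloisField 2 (2 * t + 2), a ^ 2 ^ (2 * t + 2) = a := by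
      intro a
      have := @FiniteField.pow_card (GaloisField 2 (2 * t + 2)) _ _ a
      rwa [← Nat.card_eq_fintype_card, hcard] at this
    set g : (GaloisField 2 (2 * t + 2))[X] :=
      (∑ j ∈ Finset.Icc d t,
        (C (γ j ^ ((1 + 2 ^ j) * 2 ^ (2 * t + 2 - d))) * X ^ 2 ^ (j - d)
          + C (γ j ^ ((1 + 2 ^ (2 * t + 2 - j)) * 2 ^ (2 * t + 2 - d))) * X ^ 2 ^ (2 * t + 2 - j - d)))
      + C (γ (t + 1) ^ ((1 + 2 ^ (t + 1)) * 2 ^ (2 * t + 2 - d))) * X ^ 2 ^ (t + 1 - d) with hg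
    have hφ : ∀ x : GaloisField 2 (2 * t + 2), (iterateFrobenius (GaloisField 2 (2 * t + 2)) 2 d) x = x ^ 2 ^ d :=
      fun x => iterateFrobenius_def 2 d x
    have heval : ∀ η : GaloisField 2 (2 * t + 2),
        (g.eval η) ^ 2 ^ d =
        (∑ j ∈ Finset.Icc d t,
          γ j * ((γ j * η) ^ 2 ^ j + (γ j * η) ^ 2 ^ (2 * t + 2 - j))) +
        γ (t + 1) * (γ (t + 1) * η) ^ 2 ^ (t + 1) := by
      intro η
      rw [← hφ, hg]
      simp only [eval_add, eval_finset_sum, eval_mul, eval_pow, eval_C, eval_X, map_add,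
        map_sum]
      congr 1
      · refine Finset.sum_congr rfl fun j hj => ?_
        obtain ⟨hdj, hjt⟩ := Finset.mem_Icc.mp hj
        rw [hφ, hφ, key_pow hdj hdm hfrob, key_pow (by omega) hdm hfrob, mul_add]
      · rw [hφ, key_pow (by omega) hdm hfrob]
    -- g ≠ 0
    have hpinj : ∀ a b : ℕ, (2:ℕ) ^ a = 2 ^ b ↔ a = b :=
      fun a b => ⟨fun h => Nat.pow_right_injective (by norm_num) h, fun h => by rw [h]⟩
    obtain ⟨j₀, hj₀d, hj₀t, hγ₀⟩ := hγ
    have hg0 : g ≠ 0 := by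
      rcases Nat.lt_or_ge j₀ (t + 1) with hlt | hge
      · -- j₀ ≤ t : look at coefficient of X ^ 2 ^ (2 * t + 2 - j₀ - d)
        have hj₀t' : j₀ ≤ t := by omega
        have hco : g.coeff (2 ^ (2 * t + 2 - j₀ - d)) = γ j₀ ^ ((1 + 2 ^ (2 * t + 2 - j₀)) * 2 ^ (2 * t + 2 - d)) := by
          rw [hg]
          simp only [coeff_add, finset_sum_coeff, coeff_C_mul, coeff_X_pow, hpinj]
          rw [Finset.sum_eq_single j₀ ?_ ?_]
          · rw [if_neg (by omega), if_pos rfl]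
            rw [if_neg (by omega)]
            ring
          · intro b hb hbne
            obtain ⟨h1, h2⟩ := Finset.mem_Icc.mp hb
            rw [if_neg (by omega), if_neg (by omega)]
            ring
          · intro h
            exact absurd (Finset.mem_Icc.mpr ⟨hj₀d, hj₀t'⟩) h
        intro h
        rw [h, coeff_zero] at hco
        exact pow_ne_zero _ hγ₀ hco.symm
      · -- j₀ = t + 1
        have hj₀ : j₀ = t + 1 := by omega
        subst hj₀
        have hco : g.coeff (2 ^ (t + 1 - d)) = γ (t + 1) ^ ((1 + 2 ^ (t + 1)) * 2 ^ (2 * t + 2 - d)) := by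
          rw [hg]
          simp only [coeff_add, finset_sum_coeff, coeff_C_mul, coeff_X_pow, hpinj]
          rw [Finset.sum_eq_zero ?_]
          · simp
          intro b hb
          obtain ⟨h1, h2⟩ := Finset.mem_Icc.mp hb
          rw [if_neg (by omega), if_neg (by omega)]
          ring
        intro h
        rw [h, coeff_zero] at hco
        exact pow_ne_zero _ hγ₀ hco.symm
    -- degree bound
    have hdeg : g.natDegree ≤ 2 ^ (2 * t + 2 - 2 * d) := by
      rw [hg]
      refine (natDegree_add_le _ _).trans (max_le ?_ ?_)
      · refine natDegree_sum_le_of_forall_le _ _ fun j hj => ?_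
        obtain ⟨h1, h2⟩ := Finset.mem_Icc.mp hj
        refine (natDegree_add_le _ _).trans (max_le ?_ ?_)
        · exact (natDegree_C_mul_le _ _).trans
            ((natDegree_X_pow _).le.trans (Nat.pow_le_pow_right (by norm_num) (by omega)))
        · exact (natDegree_C_mul_le _ _).trans
            ((natDegree_X_pow _).le.trans (Nat.pow_le_pow_right (by norm_num) (by omega)))
      · exact (natDegree_C_mul_le _ _).trans
          ((natDegree_X_pow _).le.trans (Nat.pow_le_pow_right (by norm_num) (by omega)))
    -- identify the set with roots of g
    have hset : {η : GaloisField 2 (2 * t + 2) |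
        (∑ j ∈ Finset.Icc d t,
          γ j * ((γ j * η) ^ 2 ^ j + (γ j * η) ^ 2 ^ (2 * t + 2 - j))) +
        γ (t + 1) * (γ (t + 1) * η) ^ 2 ^ (t + 1) = 0} = ↑g.roots.toFinset := by
      ext x
      simp only [Set.mem_setOf_eq, Finset.coe_sort_coe, Multiset.mem_toFinset, Finset.mem_coe,
        mem_roots', IsRoot.def, ← heval x]
      constructor
      · intro h
        exact ⟨hg0, pow_eq_zero_iff (by positivity) |>.mp h⟩
      · intro h
        rw [h.2, zero_pow (by positivity)]
    calc {η : GaloisField 2 (2 * t + 2) |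
        (∑ j ∈ Finset.Icc d t,
          γ j * ((γ j * η) ^ 2 ^ j + (γ j * η) ^ 2 ^ (2 * t + 2 - j))) +
        γ (t + 1) * (γ (t + 1) * η) ^ 2 ^ (t + 1) = 0}.ncard
        = g.roots.toFinset.card := by rw [hset, Set.ncard_coe_finset]
      _ ≤ Multiset.card g.roots := g.roots.toFinset_card_le
      _ ≤ g.natDegree := g.card_roots'
      _ ≤ 2 ^ (2 * t + 2 - 2 * d) := hdeg
end

section
/- Let m ≥ 2 be even and let C be an F₂-linear subspace of (Fin (2^m) → ZMod 2) of dimension 1 + 3m/2 that contains the all-one vector (i.e. C is self-complementary). Then C contains a nonzero element of Hamming weight at most 2^(m-1) − 2^(m/2 − 1); i.e. the minimum distance of C is at most 2^(m-1) − 2^(m/2 − 1), so a self-complementary linear [2^m, 1 + 3m/2, 2^(m-1) − 2^(m/2−1)] code is minimum distance optimal among self-complementary linear codes of that length and dimension. -/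
noncomputable def grChi (a : ZMod 2) : ℤ := 1 - 2 * a.val

lemma grChi_add (a b : ZMod 2) : grChi (a + b) = grChi a * grChi b := by
  revert a b; decide

lemma grChi_add_one (a : ZMod 2) : grChi (a + 1) = - grChi a := by revert a; decide

lemma zmod2_ne_zero (a : ZMod 2) (h : a ≠ 0) : a = 1 := by revert a; decide

lemma val_add_val_add_one (a : ZMod 2) : (a.val : ℤ) + ((a+1).val : ℤ) = 1 := by
  revert a; decide

lemma hammingNorm_eq_sum {n : ℕ} (v : Fin n → ZMod 2) :
    hammingNorm v = ∑ i, (v i).val := by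
  rw [hammingNorm, Finset.card_filter]
  apply Finset.sum_congr rfl
  intro i _
  by_cases h : v i = 0
  · simp [h]
  · rw [zmod2_ne_zero _ h]; decide

lemma chi_sum {n : ℕ} (v : Fin n → ZMod 2) :
    ∑ i, grChi (v i) = (n : ℤ) - 2 * (hammingNorm v : ℤ) := by
  unfold grChi
  rw [Finset.sum_sub_distrib, hammingNorm_eq_sum]
  push_cast
  rw [Finset.mul_sum]
  simp

lemma compl_norm {n : ℕ} (v : Fin n → ZMod 2) :
    hammingNorm v + hammingNorm (v + fun _ => 1) = n := by
  have : ((hammingNorm v : ℤ) + hammingNorm (v + fun _ => 1)) = n := by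
    rw [hammingNorm_eq_sum, hammingNorm_eq_sum]
    push_cast
    rw [← Finset.sum_add_distrib]
    simp only [Pi.add_apply]
    calc (∑ i, (((v i).val : ℤ) + ((v i + 1).val : ℤ))) = ∑ _i : Fin n, (1:ℤ) := by
          apply Finset.sum_congr rfl; intro i _; exact val_add_val_add_one _
      _ = n := by simp
  exact_mod_cast this

lemma grS_nonneg {n : ℕ} (C : Submodule (ZMod 2) (Fin n → ZMod 2))
    [DecidablePred (· ∈ C)] (i j : Fin n) :
    0 ≤ ∑ v ∈ Finset.univ.filter (· ∈ C), grChi (v i + v j) := by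
  classical
  by_cases hz : ∀ v ∈ C, v i + v j = 0
  · apply Finset.sum_nonneg
    intro v hv
    rw [hz v (Finset.mem_filter.1 hv).2]
    norm_num [grChi]
  · push_neg at hz
    obtain ⟨v0, hv0C, hv0⟩ := hz
    have hv0' : v0 i + v0 j = 1 := zmod2_ne_zero _ hv0
    set S := ∑ v ∈ Finset.univ.filter (· ∈ C), grChi (v i + v j) with hS
    have key : S = -S := by
      nth_rewrite 1 [hS]
      rw [show (∑ v ∈ Finset.univ.filter (· ∈ C), grChi (v i + v j))
          = ∑ v ∈ Finset.univ.filter (· ∈ C), grChi ((v + v0) i + (v + v0) j) from ?_]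
      · rw [show (∑ v ∈ Finset.univ.filter (· ∈ C), grChi ((v + v0) i + (v + v0) j))
            = ∑ v ∈ Finset.univ.filter (· ∈ C), -grChi (v i + v j) from ?_]
        · rw [← Finset.sum_neg_distrib]
        · apply Finset.sum_congr rfl
          intro v _
          simp only [Pi.add_apply]
          rw [show v i + v0 i + (v j + v0 j) = (v i + v j) + (v0 i + v0 j) by ring,
            hv0', grChi_add_one]
      · refine Finset.sum_nbij' (fun v => v + v0) (fun v => v + v0) ?_ ?_ ?_ ?_ ?_
        · intro v hv
          simp only [Finset.mem_filter, Finset.mem_univ, true_and] at *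
          exact C.add_mem hv hv0C
        · intro v hv
          simp only [Finset.mem_filter, Finset.mem_univ, true_and] at *
          exact C.add_mem hv hv0C
        · intro v _
          funext x
          simp only [Pi.add_apply]
          have : ∀ a b : ZMod 2, a + b + b = a := by decide
          exact this _ _
        · intro v _
          funext x
          simp only [Pi.add_apply]
          have : ∀ a b : ZMod 2, a + b + b = a := by decide
          exact this _ _
        · intro v _
          simp only [Pi.add_apply]
          have h2 : ∀ a b : ZMod 2, a + b + b = a := by decide
          rw [h2, h2]
    linarith

set_option maxHeartbeats 1000000 in
theorem self_complementary_grey_rankin_optimal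
    (m : ℕ) (hm : 2 ≤ m) (hme : Even m)
    (C : Submodule (ZMod 2) (Fin (2 ^ m) → ZMod 2))
    (hdim : Module.finrank (ZMod 2) C = 1 + 3 * m / 2)
    (hone : (fun _ => (1 : ZMod 2)) ∈ C) :
    ∃ x ∈ C, x ≠ 0 ∧ hammingNorm x ≤ 2 ^ (m - 1) - 2 ^ (m / 2 - 1) := by
  classical
  by_contra hcon
  push_neg at hcon
  obtain ⟨h, hh⟩ := hme
  have hm2 : m = 2 * h := by omega
  have hh1 : 1 ≤ h := by omega
  set q : ℤ := 2 ^ h with hq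
  have hq2 : (2 : ℤ) ≤ q := by
    rw [hq]
    calc (2:ℤ) = 2^1 := by norm_num
    _ ≤ 2^h := by apply pow_le_pow_right₀ <;> omega
  have hnq : ((2 ^ m : ℕ) : ℤ) = q ^ 2 := by
    rw [hq, hm2]
    push_cast
    rw [mul_comm 2 h, pow_mul]
  set Cf : Finset (Fin (2 ^ m) → ZMod 2) := Finset.univ.filter (· ∈ C) with hCf
  -- cardinality
  have hcard : (Cf.card : ℤ) = 2 * q ^ 3 := by
    have h1 : Fintype.card C = 2 ^ (1 + 3 * h) := by
      rw [Module.card_eq_pow_finrank (K := ZMod 2) (V := C), ZMod.card, hdim, hm2]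
      congr 1
      omega
    have h2 : Fintype.card C = Cf.card := by
      rw [hCf]
      exact Fintype.card_subtype _
    rw [← h2, h1, hq]
    push_cast
    rw [pow_add, mul_comm 3 h, pow_mul]
    norm_num
  -- weight bounds from the contradiction hypothesis
  set W : ℕ := 2 ^ (m - 1) - 2 ^ (m / 2 - 1) with hW
  have hWZ : 2 * ((W : ℤ) + 1) = q ^ 2 - q + 2 := by
    have hle : 2 ^ (m / 2 - 1) ≤ 2 ^ (m - 1) := Nat.pow_le_pow_right (by norm_num) (by omega)
    have hWc : (W : ℤ) = 2 ^ (m - 1) - 2 ^ (m / 2 - 1) := by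
      rw [hW]; push_cast [hle]; ring
    rw [hWc]
    have e1 : (2:ℤ) * 2 ^ (m-1) = q ^ 2 := by
      rw [hq, ← pow_succ', ← pow_mul]
      congr 1
      omega
    have e2 : (2:ℤ) * 2 ^ (m/2-1) = q := by
      rw [hq, ← pow_succ']
      congr 1
      omega
    nlinarith [e1, e2]
  -- the big sum
  set T : ℤ := ∑ v ∈ Cf, (∑ i, grChi (v i)) ^ 2 with hT
  -- lower bound
  have hTlow : ((2 ^ m : ℕ) : ℤ) * Cf.card ≤ T := by
    have expand : T = ∑ i, ∑ j, ∑ v ∈ Cf, grChi (v i + v j) := by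
      rw [hT]
      have e1 : ∀ v : Fin (2 ^ m) → ZMod 2, (∑ i, grChi (v i)) ^ 2
          = ∑ i, ∑ j, grChi (v i + v j) := by
        intro v
        rw [pow_two, Finset.sum_mul_sum]
        apply Finset.sum_congr rfl; intro i _
        apply Finset.sum_congr rfl; intro j _
        rw [grChi_add]
      calc (∑ v ∈ Cf, (∑ i, grChi (v i)) ^ 2)
          = ∑ v ∈ Cf, ∑ i, ∑ j, grChi (v i + v j) := by
            apply Finset.sum_congr rfl; intro v _; exact e1 v
        _ = ∑ i, ∑ v ∈ Cf, ∑ j, grChi (v i + v j) := Finset.sum_comm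
        _ = ∑ i, ∑ j, ∑ v ∈ Cf, grChi (v i + v j) := by
            apply Finset.sum_congr rfl; intro i _; exact Finset.sum_comm
    rw [expand]
    have diag : ∀ i : Fin (2 ^ m), (Cf.card : ℤ) = ∑ v ∈ Cf, grChi (v i + v i) := by
      intro i
      have hzz : ∀ a : ZMod 2, grChi (a + a) = 1 := by decide
      simp [hzz]
    calc ((2 ^ m : ℕ) : ℤ) * Cf.card = ∑ _i : Fin (2 ^ m), (Cf.card : ℤ) := by
          simp [mul_comm]
      _ ≤ ∑ i, ∑ j, ∑ v ∈ Cf, grChi (v i + v j) := by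
          apply Finset.sum_le_sum
          intro i _
          rw [diag i]
          exact Finset.single_le_sum (fun j _ => grS_nonneg C i j) (Finset.mem_univ i)
  -- upper bound
  have hup : ∀ v ∈ Cf, (∑ i, grChi (v i)) ^ 2
      ≤ (q - 2) ^ 2 + (if v = 0 ∨ v = (fun _ => 1) then ((2 ^ m : ℕ) : ℤ) ^ 2 else 0) := by
    intro v hv
    have hvC : v ∈ C := (Finset.mem_filter.1 hv).2
    by_cases h0 : v = 0 ∨ v = (fun _ => 1)
    · rw [if_pos h0]
      have hsq : (∑ i, grChi (v i)) ^ 2 = ((2 ^ m : ℕ) : ℤ) ^ 2 := by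
        rcases h0 with h0 | h0 <;> rw [h0, chi_sum]
        · simp
        · have hnn : hammingNorm (fun _ : Fin (2 ^ m) => (1 : ZMod 2)) = 2 ^ m := by
            have := compl_norm (0 : Fin (2 ^ m) → ZMod 2)
            simpa using this
          rw [hnn]; push_cast; ring
      rw [hsq]
      linarith [sq_nonneg (q - 2)]
    · rw [if_neg h0]
      push_neg at h0
      obtain ⟨hv0, hv1⟩ := h0
      have hlow : W + 1 ≤ hammingNorm v := hcon v hvC hv0
      have hcompl : v + (fun _ => 1) ∈ C := C.add_mem hvC hone
      have hcne : v + (fun _ => 1) ≠ 0 := by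
        intro hc
        apply hv1
        funext x
        have hx := congrFun hc x
        simp only [Pi.add_apply, Pi.zero_apply] at hx
        have h2 : ∀ a : ZMod 2, a + 1 = 0 → a = 1 := by decide
        exact h2 _ hx
      have hlow2 : W + 1 ≤ hammingNorm (v + fun _ => 1) := hcon _ hcompl hcne
      have hsum : hammingNorm v + hammingNorm (v + fun _ => 1) = 2 ^ m := compl_norm v
      rw [chi_sum]
      have hwv1 : ((W : ℤ) + 1) ≤ hammingNorm v := by exact_mod_cast hlow
      have hwv2 : ((W : ℤ) + 1) ≤ hammingNorm (v + fun _ => 1) := by exact_mod_cast hlow2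
      have hsumz : (hammingNorm v : ℤ) + hammingNorm (v + fun _ => 1) = (2 ^ m : ℕ) := by
        exact_mod_cast hsum
      have hb1 : ((2 ^ m : ℕ) : ℤ) - 2 * hammingNorm v ≤ q - 2 := by
        linarith [hWZ, hnq, hwv1]
      have hb2 : -(q - 2) ≤ ((2 ^ m : ℕ) : ℤ) - 2 * hammingNorm v := by
        linarith [hWZ, hnq, hwv2, hsumz]
      have hfin := sq_le_sq' hb2 hb1
      linarith
  have hite : (∑ v ∈ Cf, if v = 0 ∨ v = (fun _ => 1) then ((2 ^ m : ℕ) : ℤ) ^ 2 else 0)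
      ≤ 2 * ((2 ^ m : ℕ) : ℤ) ^ 2 := by
    rw [← Finset.sum_filter]
    have hsub : Cf.filter (fun v => v = 0 ∨ v = (fun _ => 1))
        ⊆ {0, (fun _ => 1)} := by
      intro v hv
      simp only [Finset.mem_filter, Finset.mem_insert, Finset.mem_singleton] at hv ⊢
      exact hv.2
    have hcard2 : (Cf.filter (fun v => v = 0 ∨ v = (fun _ => 1))).card ≤ 2 := by
      refine (Finset.card_le_card hsub).trans ?_
      refine (Finset.card_insert_le _ _).trans ?_
      simp
    rw [Finset.sum_const, nsmul_eq_mul]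
    have : ((Cf.filter (fun v => v = 0 ∨ v = (fun _ => 1))).card : ℤ) ≤ 2 := by
      exact_mod_cast hcard2
    exact mul_le_mul_of_nonneg_right this (sq_nonneg _)
  have hTup : T ≤ Cf.card * (q - 2) ^ 2 + 2 * ((2 ^ m : ℕ) : ℤ) ^ 2 := by
    have hsle := Finset.sum_le_sum hup
    rw [← hT] at hsle
    refine hsle.trans ?_
    rw [Finset.sum_add_distrib, Finset.sum_const, nsmul_eq_mul]
    exact add_le_add le_rfl hite
  rw [hnq, hcard] at hTlow
  rw [hcard, hnq] at hTup
  nlinarith [hTlow, hTup, hq2]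
end

section
/- For every even integer m ≥ 2 there exists an additive subgroup G of the m × m matrices over ZMod 2 such that: G has exactly 2^(m/2) elements; every matrix B ∈ G is symplectic, i.e. symmetric (Bᵀ = B) with zero diagonal (B i i = 0 for all i); and every nonzero B ∈ G has full rank m (equivalently, is invertible over ZMod 2). -/
open Matrix in

theorem exists_additive_group_of_full_rank_symplectic_matrices
    (m : ℕ) (hm : 2 ≤ m) (hme : Even m) :
    ∃ G : AddSubgroup (Matrix (Fin m) (Fin m) (ZMod 2)),
      Nat.card G = 2 ^ (m / 2) ∧
      (∀ B ∈ G, B.transpose = B ∧ ∀ i : Fin m, B i i = 0) ∧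
      (∀ B ∈ G, B ≠ 0 → B.rank = m ∧ IsUnit B) := by
  obtain ⟨n, hn⟩ := hme
  have hn0 : n ≠ 0 := by omega
  have hfact : Fact (Nat.Prime 2) := ⟨Nat.prime_two⟩
  set K := GaloisField 2 n with hK
  have hfr : Module.finrank (ZMod 2) K = n := GaloisField.finrank 2 hn0
  let b : Module.Basis (Fin n) (ZMod 2) K :=
    (Module.finBasis (ZMod 2) K).reindex (finCongr hfr)
  let A : K →ₐ[ZMod 2] Matrix (Fin n) (Fin n) (ZMod 2) := Algebra.leftMulMatrix b
  have hAinj : Function.Injective A := Algebra.leftMulMatrix_injective b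
  let e : Fin n ⊕ Fin n ≃ Fin m := finSumFinEquiv.trans (finCongr (by omega))
  let ψ := Matrix.reindexAlgEquiv (ZMod 2) (ZMod 2) e
  let f : K →+ Matrix (Fin m) (Fin m) (ZMod 2) :=
    { toFun := fun a => ψ (Matrix.fromBlocks 0 (A a) (A a)ᵀ 0)
      map_zero' := by simp
      map_add' := by
        intro x y
        ext i j
        rcases hi : e.symm i with xi | xi <;> rcases hj : e.symm j with xj | xj <;>
          simp [ψ, Matrix.reindexAlgEquiv_apply, Matrix.reindex_apply,
            Matrix.submatrix_apply, hi, hj, Matrix.fromBlocks, Matrix.add_apply,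
            Matrix.transpose_apply, map_add] }
  have hfinj : Function.Injective f := by
    intro x y hxy
    have h2 : Matrix.fromBlocks 0 (A x) (A x)ᵀ 0
        = Matrix.fromBlocks (0 : Matrix (Fin n) (Fin n) (ZMod 2)) (A y) (A y)ᵀ 0 :=
      ψ.injective hxy
    exact hAinj (Matrix.fromBlocks_inj.mp h2).2.1
  refine ⟨f.range, ?_, ?_, ?_⟩
  · have h1 : Nat.card f.range = Nat.card K := by
      rw [← Nat.card_range_of_injective hfinj]
      rfl
    rw [h1, GaloisField.card 2 n hn0]
    congr 1
    omega
  · rintro B ⟨a, rfl⟩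
    constructor
    · show (ψ (Matrix.fromBlocks 0 (A a) (A a)ᵀ 0))ᵀ = _
      rw [Matrix.reindexAlgEquiv_apply, Matrix.transpose_reindex,
        Matrix.fromBlocks_transpose]
      simp only [Matrix.transpose_transpose, Matrix.transpose_zero]
      rfl
    · intro i
      show (ψ (Matrix.fromBlocks 0 (A a) (A a)ᵀ 0)) i i = 0
      rw [Matrix.reindexAlgEquiv_apply, Matrix.reindex_apply]
      rcases h : e.symm i with x | x <;>
        simp [Matrix.submatrix_apply, h]
  · rintro B ⟨a, rfl⟩ hB0
    have ha : a ≠ 0 := by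
      rintro rfl
      exact hB0 (map_zero f)
    have hA : IsUnit (A a) := (isUnit_iff_ne_zero.mpr ha).map A
    have hAd : IsUnit (A a).det := (Matrix.isUnit_iff_isUnit_det _).mp hA
    set M := Matrix.fromBlocks (0 : Matrix (Fin n) (Fin n) (ZMod 2)) (A a) (A a)ᵀ 0 with hM
    set N := Matrix.fromBlocks (0 : Matrix (Fin n) (Fin n) (ZMod 2)) ((A a)⁻¹)ᵀ (A a)⁻¹ 0 with hN
    have hMN : M * N = 1 := by
      rw [hM, hN, Matrix.fromBlocks_multiply]
      simp [Matrix.mul_nonsing_inv _ hAd, ← Matrix.transpose_mul,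
        Matrix.nonsing_inv_mul _ hAd, Matrix.fromBlocks_one]
    have hNM : N * M = 1 := by
      rw [hM, hN, Matrix.fromBlocks_multiply]
      simp [Matrix.nonsing_inv_mul _ hAd, ← Matrix.transpose_mul,
        Matrix.mul_nonsing_inv _ hAd, Matrix.fromBlocks_one]
    have hMu : IsUnit M := ⟨⟨M, N, hMN, hNM⟩, rfl⟩
    have hBu : IsUnit (f a) := hMu.map ψ
    exact ⟨by rw [Matrix.rank_of_isUnit _ hBu, Fintype.card_fin], hBu⟩
end
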